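/- arXiv:math/0402133 — 6 statements merged into one kernel-verified Lean document; each statement's English description precedes it below -/
import Mathlib

section
/- Let (S,μ) be a standard Borel probability space, and let φ and φ_n (n ∈ ℕ) be measure-class-preserving Borel automorphisms of S. Assume φ_n → φ in the Koopman (strong operator) topology. If A and A_n (n ∈ ℕ) are measurable subsets of S with μ(A_n Δ A) → 0 (Δ denoting symmetric difference), then μ(φ_n(A_n) Δ φ(A)) → 0. (That is, the natural action of the group of measure-class-preserving automorphisms on the measure algebra of (S,μ) is jointly continuous.) -/
open MeasureTheory Filter Topology
open scoped ENNReal NNReal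

namespace KoopmanAux

variable {S : Type*} [MeasurableSpace S]

lemma lintegral_rnDeriv_mul_comp_symm (μ : Measure S) [IsProbabilityMeasure μ]
    (ψ : S ≃ᵐ S) (hac : μ.map ψ ≪ μ) {g : S → ℝ≥0∞} (hg : Measurable g) :
    ∫⁻ s, (μ.map ψ).rnDeriv μ s * g (ψ.symm s) ∂μ = ∫⁻ s, g s ∂μ := by
  haveI : IsProbabilityMeasure (μ.map ψ) := Measure.isProbabilityMeasure_map ψ.measurable.aemeasurable
  have h1 : ∫⁻ s, g (ψ.symm s) ∂(μ.withDensity ((μ.map ψ).rnDeriv μ))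
      = ∫⁻ s, ((μ.map ψ).rnDeriv μ * fun s => g (ψ.symm s)) s ∂μ :=
    lintegral_withDensity_eq_lintegral_mul μ (Measure.measurable_rnDeriv _ _)
      (hg.comp ψ.symm.measurable)
  rw [Measure.withDensity_rnDeriv_eq _ _ hac] at h1
  simp only [Pi.mul_apply] at h1
  rw [← h1, lintegral_map_equiv (fun s => g (ψ.symm s)) ψ]
  simp

lemma lintegral_ofReal_sq_sqrt_mul (μ : Measure S) [IsProbabilityMeasure μ]
    (ψ : S ≃ᵐ S) (hac : μ.map ψ ≪ μ) {h : S → ℝ} (hh : Measurable h) :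
    ∫⁻ s, ENNReal.ofReal ((Real.sqrt (((μ.map ψ).rnDeriv μ s).toReal) * h (ψ.symm s)) ^ 2) ∂μ
      = ∫⁻ s, ENNReal.ofReal (h s ^ 2) ∂μ := by
  haveI : IsProbabilityMeasure (μ.map ψ) := Measure.isProbabilityMeasure_map ψ.measurable.aemeasurable
  have hfin : ∀ᵐ s ∂μ, (μ.map ψ).rnDeriv μ s < ∞ := Measure.rnDeriv_lt_top _ _
  have e1 : ∫⁻ s, ENNReal.ofReal
        ((Real.sqrt (((μ.map ψ).rnDeriv μ s).toReal) * h (ψ.symm s)) ^ 2) ∂μ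
      = ∫⁻ s, (μ.map ψ).rnDeriv μ s * ENNReal.ofReal (h (ψ.symm s) ^ 2) ∂μ := by
    refine lintegral_congr_ae ?_
    filter_upwards [hfin] with s hs
    rw [mul_pow, Real.sq_sqrt ENNReal.toReal_nonneg,
      ENNReal.ofReal_mul ENNReal.toReal_nonneg, ENNReal.ofReal_toReal hs.ne]
  rw [e1]
  exact lintegral_rnDeriv_mul_comp_symm μ ψ hac ((hh.pow_const 2).ennreal_ofReal)

lemma meas_abs_ge_le (μ : Measure S) {h : S → ℝ} (hh : Measurable h) {δ : ℝ} (hδ : 0 < δ) :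
    μ {s | δ ≤ |h s|} ≤ (∫⁻ s, ENNReal.ofReal (h s ^ 2) ∂μ) / ENNReal.ofReal (δ ^ 2) := by
  have hsub : {s | δ ≤ |h s|} ⊆ {s | ENNReal.ofReal (δ ^ 2) ≤ ENNReal.ofReal (h s ^ 2)} := by
    intro s hs
    refine ENNReal.ofReal_le_ofReal ?_
    rw [← sq_abs (h s)]
    exact pow_le_pow_left₀ hδ.le hs 2
  have hM := mul_meas_ge_le_lintegral₀ ((hh.pow_const 2).ennreal_ofReal.aemeasurable (μ := μ))
      (ENNReal.ofReal (δ ^ 2))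
  have h0 : ENNReal.ofReal (δ ^ 2) ≠ 0 := ne_of_gt (ENNReal.ofReal_pos.mpr (by positivity))
  rw [ENNReal.le_div_iff_mul_le (Or.inl h0) (Or.inl ENNReal.ofReal_ne_top)]
  calc μ {s | δ ≤ |h s|} * ENNReal.ofReal (δ ^ 2)
      = ENNReal.ofReal (δ ^ 2) * μ {s | δ ≤ |h s|} := mul_comm _ _
    _ ≤ ENNReal.ofReal (δ ^ 2)
        * μ {s | ENNReal.ofReal (δ ^ 2) ≤ ENNReal.ofReal (h s ^ 2)} := by
        exact mul_le_mul_right (measure_mono hsub) _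
    _ ≤ _ := hM

lemma lintegral_ofReal_sq_add_le (μ : Measure S) {f g : S → ℝ}
    (hf : Measurable f) (hg : Measurable g) :
    ∫⁻ s, ENNReal.ofReal ((f s + g s) ^ 2) ∂μ
      ≤ 2 * ∫⁻ s, ENNReal.ofReal (f s ^ 2) ∂μ + 2 * ∫⁻ s, ENNReal.ofReal (g s ^ 2) ∂μ := by
  have hpt : ∀ s, ENNReal.ofReal ((f s + g s) ^ 2)
      ≤ 2 * ENNReal.ofReal (f s ^ 2) + 2 * ENNReal.ofReal (g s ^ 2) := by
    intro s
    calc ENNReal.ofReal ((f s + g s) ^ 2) ≤ ENNReal.ofReal (2 * f s ^ 2 + 2 * g s ^ 2) :=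
          ENNReal.ofReal_le_ofReal (by nlinarith [sq_nonneg (f s - g s)])
      _ = _ := by
          rw [ENNReal.ofReal_add (by positivity) (by positivity),
            ENNReal.ofReal_mul (by norm_num), ENNReal.ofReal_mul (by norm_num),
            ENNReal.ofReal_ofNat]
  calc ∫⁻ s, ENNReal.ofReal ((f s + g s) ^ 2) ∂μ
      ≤ ∫⁻ s, (2 * ENNReal.ofReal (f s ^ 2) + 2 * ENNReal.ofReal (g s ^ 2)) ∂μ :=
        lintegral_mono hpt
    _ = _ := by
        rw [lintegral_add_left (((hf.pow_const 2).ennreal_ofReal).const_mul 2),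
          lintegral_const_mul 2 ((hf.pow_const 2).ennreal_ofReal),
          lintegral_const_mul 2 ((hg.pow_const 2).ennreal_ofReal)]

lemma lintegral_ofReal_sq_sub_le (μ : Measure S) {f g : S → ℝ}
    (hf : Measurable f) (hg : Measurable g) :
    ∫⁻ s, ENNReal.ofReal ((f s - g s) ^ 2) ∂μ
      ≤ 2 * ∫⁻ s, ENNReal.ofReal (f s ^ 2) ∂μ + 2 * ∫⁻ s, ENNReal.ofReal (g s ^ 2) ∂μ := by
  have := lintegral_ofReal_sq_add_le μ hf hg.neg
  simpa [sub_eq_add_neg] using this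

lemma integrable_sq_of_lintegral_lt (μ : Measure S) {h : S → ℝ} (hh : Measurable h)
    (hfin : ∫⁻ s, ENNReal.ofReal (h s ^ 2) ∂μ < ∞) : Integrable (fun s => h s ^ 2) μ := by
  refine ⟨(hh.pow_const 2).aestronglyMeasurable, ?_⟩
  rw [hasFiniteIntegral_iff_ofReal (ae_of_all _ fun s => sq_nonneg (h s))]
  exact hfin

end KoopmanAux

open KoopmanAux in
/-- The natural action of the group of measure-class-preserving
automorphisms of a standard Borel probability space `(S, μ)` on the measure
algebra of `(S, μ)` is jointly continuous: if `φₙ → φ` in the Koopman (strong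
operator) topology and `μ (Aₙ ∆ A) → 0`, then `μ (φₙ(Aₙ) ∆ φ(A)) → 0`. -/
theorem koopman_action_on_measure_algebra_continuous
    {S : Type*} [MeasurableSpace S] [StandardBorelSpace S]
    (μ : Measure S) [IsProbabilityMeasure μ]
    (φ : S ≃ᵐ S) (φn : ℕ → S ≃ᵐ S)
    (hφ : μ.map φ ≪ μ ∧ μ ≪ μ.map φ)
    (hφn : ∀ n, μ.map (φn n) ≪ μ ∧ μ ≪ μ.map (φn n))
    (hK : ∀ f : S → ℝ, Measurable f → Integrable (fun s => (f s) ^ 2) μ →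
      Tendsto
        (fun n => ∫ s,
          (Real.sqrt (((μ.map (φn n)).rnDeriv μ s).toReal) * f ((φn n).symm s)
            - Real.sqrt (((μ.map φ).rnDeriv μ s).toReal) * f (φ.symm s)) ^ 2 ∂μ)
        atTop (𝓝 0))
    (A : Set S) (hA : MeasurableSet A)
    (An : ℕ → Set S) (hAn : ∀ n, MeasurableSet (An n))
    (hconv : Tendsto (fun n => μ (symmDiff (An n) A)) atTop (𝓝 0)) :
    Tendsto (fun n => μ (symmDiff (⇑(φn n) '' An n) (⇑φ '' A))) atTop (𝓝 0) := by
  classical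
  haveI hPφ : IsProbabilityMeasure (μ.map φ) :=
    Measure.isProbabilityMeasure_map φ.measurable.aemeasurable
  set u : S → ℝ := fun s => Real.sqrt (((μ.map φ).rnDeriv μ s).toReal) with hu_def
  set un : ℕ → S → ℝ := fun n s => Real.sqrt (((μ.map (φn n)).rnDeriv μ s).toReal) with hun_def
  have hu : Measurable u := (Measure.measurable_rnDeriv _ _).ennreal_toReal.sqrt
  have hun : ∀ n, Measurable (un n) := fun n =>
    (Measure.measurable_rnDeriv _ _).ennreal_toReal.sqrt
  set χ : Set S → S → ℝ := fun E => E.indicator (fun _ => (1:ℝ)) with hχ_def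
  have hχA : Measurable (χ A) := measurable_const.indicator hA
  have hχAn : ∀ n, Measurable (χ (An n)) := fun n => measurable_const.indicator (hAn n)
  -- change of variables
  have cov : ∀ (n : ℕ) {h : S → ℝ}, Measurable h →
      ∫⁻ s, ENNReal.ofReal ((un n s * h ((φn n).symm s)) ^ 2) ∂μ
        = ∫⁻ s, ENNReal.ofReal (h s ^ 2) ∂μ :=
    by intro n h hh; exact lintegral_ofReal_sq_sqrt_mul μ (φn n) (hφn n).1 hh
  have covφ : ∀ {h : S → ℝ}, Measurable h →
      ∫⁻ s, ENNReal.ofReal ((u s * h (φ.symm s)) ^ 2) ∂μ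
        = ∫⁻ s, ENNReal.ofReal (h s ^ 2) ∂μ :=
    by intro h hh; exact lintegral_ofReal_sq_sqrt_mul μ φ hφ.1 hh
  -- main convergence in lintegral form
  have main : ∀ (f : S → ℝ), Measurable f → Integrable (fun s => f s ^ 2) μ →
      Tendsto (fun n => ∫⁻ s,
          ENNReal.ofReal ((un n s * f ((φn n).symm s) - u s * f (φ.symm s)) ^ 2) ∂μ)
        atTop (𝓝 0) := by
    intro f hf hfint
    have hJf : ∫⁻ s, ENNReal.ofReal (f s ^ 2) ∂μ < ∞ := by
      rw [← ofReal_integral_eq_lintegral_ofReal hfint (ae_of_all _ fun s => sq_nonneg _)]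
      exact ENNReal.ofReal_lt_top
    have hm1 : ∀ n, Measurable (fun s => un n s * f ((φn n).symm s)) := fun n =>
      (hun n).mul (hf.comp (φn n).symm.measurable)
    have hm2 : Measurable (fun s => u s * f (φ.symm s)) := hu.mul (hf.comp φ.symm.measurable)
    have hgn_meas : ∀ n, Measurable
        (fun s => un n s * f ((φn n).symm s) - u s * f (φ.symm s)) :=
      fun n => (hm1 n).sub hm2
    have hfinn : ∀ n, ∫⁻ s,
        ENNReal.ofReal ((un n s * f ((φn n).symm s) - u s * f (φ.symm s)) ^ 2) ∂μ < ∞ := by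
      intro n
      refine lt_of_le_of_lt (lintegral_ofReal_sq_sub_le μ (hm1 n) hm2) ?_
      rw [cov n hf, covφ hf]
      exact ENNReal.add_lt_top.mpr
        ⟨ENNReal.mul_lt_top ENNReal.ofNat_lt_top hJf,
          ENNReal.mul_lt_top ENNReal.ofNat_lt_top hJf⟩
    have hint : ∀ n, Integrable
        (fun s => (un n s * f ((φn n).symm s) - u s * f (φ.symm s)) ^ 2) μ :=
      fun n => integrable_sq_of_lintegral_lt μ (hgn_meas n) (hfinn n)
    have hKf : Tendsto (fun n => ∫ s,
        (un n s * f ((φn n).symm s) - u s * f (φ.symm s)) ^ 2 ∂μ) atTop (𝓝 0) :=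
      hK f hf hfint
    have hT := ENNReal.tendsto_ofReal hKf
    rw [ENNReal.ofReal_zero] at hT
    exact hT.congr fun n =>
      ofReal_integral_eq_lintegral_ofReal (hint n) (ae_of_all _ fun s => sq_nonneg _)
  -- piece 1 : f = 1
  have hJ1 : Tendsto (fun n => ∫⁻ s, ENNReal.ofReal ((un n s - u s) ^ 2) ∂μ)
      atTop (𝓝 0) := by
    have h := main (fun _ => 1) measurable_const (by simpa using integrable_const (1:ℝ))
    simpa using h
  -- piece 2 : f = indicator of A
  have hχAsq : (fun s => χ A s ^ 2) = χ A := by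
    funext s; by_cases hs : s ∈ A <;> simp [hχ_def, hs]
  have hJ2 : Tendsto (fun n => ∫⁻ s,
      ENNReal.ofReal ((un n s * χ A ((φn n).symm s) - u s * χ A (φ.symm s)) ^ 2) ∂μ)
      atTop (𝓝 0) := by
    refine main (χ A) hχA ?_
    rw [hχAsq]
    exact (integrable_const (1:ℝ)).indicator hA
  -- piece 3 : change of variables for the symmetric difference
  have hJ3 : Tendsto (fun n => ∫⁻ s, ENNReal.ofReal
      ((un n s * (χ (An n) ((φn n).symm s) - χ A ((φn n).symm s))) ^ 2) ∂μ)
      atTop (𝓝 0) := by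
    have heq : ∀ n, ∫⁻ s, ENNReal.ofReal
        ((un n s * (χ (An n) ((φn n).symm s) - χ A ((φn n).symm s))) ^ 2) ∂μ
        = μ (symmDiff (An n) A) := by
      intro n
      have e := cov n (h := fun x => χ (An n) x - χ A x) ((hχAn n).sub hχA)
      refine Eq.trans (by exact e) ?_
      have hpt : ∀ x, ENNReal.ofReal ((χ (An n) x - χ A x) ^ 2)
          = (symmDiff (An n) A).indicator (fun _ => (1:ℝ≥0∞)) x := by
        intro x
        by_cases h1 : x ∈ An n <;> by_cases h2 : x ∈ A <;>
          simp [hχ_def, Set.indicator_apply, Set.mem_symmDiff, h1, h2]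
      rw [lintegral_congr hpt]
      exact lintegral_indicator_one ((hAn n).symmDiff hA)
    exact hconv.congr fun n => (heq n).symm
  -- the combined quantity G
  have hGmeas : ∀ n, Measurable
      (fun s => un n s * χ (An n) ((φn n).symm s) - u s * χ A (φ.symm s)) := fun n =>
    ((hun n).mul ((hχAn n).comp (φn n).symm.measurable)).sub
      (hu.mul (hχA.comp φ.symm.measurable))
  have hJG : Tendsto (fun n => ∫⁻ s, ENNReal.ofReal
      ((un n s * χ (An n) ((φn n).symm s) - u s * χ A (φ.symm s)) ^ 2) ∂μ)
      atTop (𝓝 0) := by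
    have hGle : ∀ n, ∫⁻ s, ENNReal.ofReal
        ((un n s * χ (An n) ((φn n).symm s) - u s * χ A (φ.symm s)) ^ 2) ∂μ
        ≤ 2 * ∫⁻ s, ENNReal.ofReal
            ((un n s * (χ (An n) ((φn n).symm s) - χ A ((φn n).symm s))) ^ 2) ∂μ
          + 2 * ∫⁻ s, ENNReal.ofReal
            ((un n s * χ A ((φn n).symm s) - u s * χ A (φ.symm s)) ^ 2) ∂μ := by
      intro n
      have hle := lintegral_ofReal_sq_add_le μ
        (f := fun s => un n s * (χ (An n) ((φn n).symm s) - χ A ((φn n).symm s)))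
        (g := fun s => un n s * χ A ((φn n).symm s) - u s * χ A (φ.symm s))
        ((hun n).mul (((hχAn n).comp (φn n).symm.measurable).sub
          (hχA.comp (φn n).symm.measurable)))
        (((hun n).mul (hχA.comp (φn n).symm.measurable)).sub
          (hu.mul (hχA.comp φ.symm.measurable)))
      refine le_trans (le_of_eq (lintegral_congr fun s => ?_)) hle
      congr 1
      ring
    have hbound : Tendsto (fun n =>
        2 * ∫⁻ s, ENNReal.ofReal
            ((un n s * (χ (An n) ((φn n).symm s) - χ A ((φn n).symm s))) ^ 2) ∂μ
          + 2 * ∫⁻ s, ENNReal.ofReal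
            ((un n s * χ A ((φn n).symm s) - u s * χ A (φ.symm s)) ^ 2) ∂μ)
        atTop (𝓝 0) := by
      have h := (ENNReal.Tendsto.const_mul hJ3 (Or.inr (ENNReal.ofNat_ne_top (n := 2)))).add
        (ENNReal.Tendsto.const_mul hJ2 (Or.inr (ENNReal.ofNat_ne_top (n := 2))))
      simpa using h
    exact tendsto_of_tendsto_of_tendsto_of_le_of_le tendsto_const_nhds hbound
      (fun n => zero_le) hGle
  -- positivity of u
  have hnull : μ {s | u s ≤ 0} = 0 := by
    have hpos : ∀ᵐ s ∂μ, 0 < u s := by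
      have h1 : ∀ᵐ s ∂μ, 0 < (μ.map φ).rnDeriv μ s := Measure.rnDeriv_pos' hφ.2
      have h2 : ∀ᵐ s ∂μ, (μ.map φ).rnDeriv μ s < ∞ := Measure.rnDeriv_lt_top _ _
      filter_upwards [h1, h2] with s hs1 hs2
      exact Real.sqrt_pos.mpr (ENNReal.toReal_pos hs1.ne' hs2.ne)
    have hset : {s | u s ≤ 0} = {s | ¬ 0 < u s} := by ext s; simp [not_lt]
    rw [hset]
    exact ae_iff.mp hpos
  -- final assembly
  rw [ENNReal.tendsto_nhds_zero]
  intro ε hε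
  have h3ne : (3:ℝ≥0∞) ≠ ∞ := by simp
  have hε3 : (0:ℝ≥0∞) < ε / 3 := ENNReal.div_pos hε.ne' h3ne
  obtain ⟨k, hk⟩ : ∃ k : ℕ, μ {s | u s ≤ 2 * (1 / ((k:ℝ) + 1))} ≤ ε / 3 := by
    have hmono : Antitone (fun k : ℕ => {s | u s ≤ 2 * (1 / ((k:ℝ) + 1))}) := by
      intro k l hkl s hs
      have h1 : (1:ℝ) / ((l:ℝ) + 1) ≤ 1 / ((k:ℝ) + 1) := by
        apply one_div_le_one_div_of_le (by positivity)
        have : (k:ℝ) ≤ (l:ℝ) := by exact_mod_cast hkl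
        linarith
      simp only [Set.mem_setOf_eq] at hs ⊢
      linarith
    have hT := tendsto_measure_iInter_atTop (μ := μ)
      (fun k => (measurableSet_le hu measurable_const).nullMeasurableSet) hmono
      ⟨0, measure_ne_top μ _⟩
    have hI : μ (⋂ k : ℕ, {s | u s ≤ 2 * (1 / ((k:ℝ) + 1))}) = 0 := by
      refine measure_mono_null ?_ hnull
      intro s hs
      simp only [Set.mem_iInter, Set.mem_setOf_eq] at hs
      by_contra hpos
      simp only [Set.mem_setOf_eq, not_le] at hpos
      obtain ⟨k, hk'⟩ := exists_nat_one_div_lt (show (0:ℝ) < u s / 2 by linarith)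
      have := hs k
      linarith
    rw [hI] at hT
    exact ((ENNReal.tendsto_nhds_zero.mp hT) (ε / 3) hε3).exists
  set δ : ℝ := 1 / ((k:ℝ) + 1) with hδ_def
  have hδ : 0 < δ := by positivity
  have hc0 : ENNReal.ofReal (δ ^ 2) ≠ 0 := ne_of_gt (ENNReal.ofReal_pos.mpr (by positivity))
  have hcpos : (0:ℝ≥0∞) < ε / 3 * ENNReal.ofReal (δ ^ 2) := ENNReal.mul_pos hε3.ne' hc0
  have hE1 := (ENNReal.tendsto_nhds_zero.mp hJ1) _ hcpos
  have hE3 := (ENNReal.tendsto_nhds_zero.mp hJG) _ hcpos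
  filter_upwards [hE1, hE3] with n h1 h3
  -- the inclusion
  have incl : symmDiff (⇑(φn n) '' An n) (⇑φ '' A) ⊆
      {s | δ ≤ |un n s - u s|} ∪ ({s | u s ≤ 2 * (1 / ((k:ℝ) + 1))} ∪
        {s | δ ≤ |un n s * χ (An n) ((φn n).symm s) - u s * χ A (φ.symm s)|}) := by
    intro s hs
    rw [Set.mem_symmDiff] at hs
    have hmem1 : s ∈ ⇑(φn n) '' An n ↔ (φn n).symm s ∈ An n := by
      rw [MeasurableEquiv.image_eq_preimage_symm]; rfl
    have hmem2 : s ∈ ⇑φ '' A ↔ φ.symm s ∈ A := by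
      rw [MeasurableEquiv.image_eq_preimage_symm]; rfl
    have hun_nn : 0 ≤ un n s := Real.sqrt_nonneg _
    have hu_nn : 0 ≤ u s := Real.sqrt_nonneg _
    rcases hs with ⟨hin, hout⟩ | ⟨hin, hout⟩
    · have ha : χ (An n) ((φn n).symm s) = 1 :=
        Set.indicator_of_mem (hmem1.mp hin) _
      have hb : χ A (φ.symm s) = 0 :=
        Set.indicator_of_notMem (fun h => hout (hmem2.mpr h)) _
      by_cases hcase : δ ≤ un n s
      · right; right
        simp only [Set.mem_setOf_eq]
        rw [ha, hb]
        have he : un n s * 1 - u s * 0 = un n s := by ring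
        rw [he, abs_of_nonneg hun_nn]
        exact hcase
      · push_neg at hcase
        by_cases hd : δ ≤ |un n s - u s|
        · left; exact hd
        · push_neg at hd
          right; left
          simp only [Set.mem_setOf_eq]
          have habs := abs_lt.mp hd
          rw [← hδ_def]
          linarith [habs.1, habs.2]
    · have ha : χ A (φ.symm s) = 1 := Set.indicator_of_mem (hmem2.mp hin) _
      have hb : χ (An n) ((φn n).symm s) = 0 :=
        Set.indicator_of_notMem (fun h => hout (hmem1.mpr h)) _
      by_cases hcase : u s ≤ 2 * (1 / ((k:ℝ) + 1))
      · right; left; exact hcase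
      · push_neg at hcase
        right; right
        simp only [Set.mem_setOf_eq]
        rw [ha, hb]
        have he : un n s * 0 - u s * 1 = -(u s) := by ring
        rw [he, abs_neg, abs_of_nonneg hu_nn]
        rw [← hδ_def] at hcase
        linarith
  -- Chebyshev bounds
  have divle : ∀ (x : ℝ≥0∞), x ≤ ε / 3 * ENNReal.ofReal (δ ^ 2) →
      x / ENNReal.ofReal (δ ^ 2) ≤ ε / 3 := by
    intro x hx
    refine le_trans (ENNReal.div_le_div_right hx _) ?_
    rw [mul_div_assoc]
    exact le_trans (mul_le_mul_right ENNReal.div_self_le_one _) (by rw [mul_one])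
  have b1 : μ {s | δ ≤ |un n s - u s|} ≤ ε / 3 :=
    le_trans (meas_abs_ge_le μ ((hun n).sub hu) hδ) (divle _ h1)
  have b3 : μ {s | δ ≤ |un n s * χ (An n) ((φn n).symm s) - u s * χ A (φ.symm s)|} ≤ ε / 3 :=
    le_trans (meas_abs_ge_le μ (hGmeas n) hδ) (divle _ h3)
  calc μ (symmDiff (⇑(φn n) '' An n) (⇑φ '' A))
      ≤ μ ({s | δ ≤ |un n s - u s|} ∪ ({s | u s ≤ 2 * (1 / ((k:ℝ) + 1))} ∪
          {s | δ ≤ |un n s * χ (An n) ((φn n).symm s) - u s * χ A (φ.symm s)|})) :=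
        measure_mono incl
    _ ≤ μ {s | δ ≤ |un n s - u s|} + μ ({s | u s ≤ 2 * (1 / ((k:ℝ) + 1))} ∪
          {s | δ ≤ |un n s * χ (An n) ((φn n).symm s) - u s * χ A (φ.symm s)|}) :=
        measure_union_le _ _
    _ ≤ μ {s | δ ≤ |un n s - u s|} + (μ {s | u s ≤ 2 * (1 / ((k:ℝ) + 1))} +
          μ {s | δ ≤ |un n s * χ (An n) ((φn n).symm s) - u s * χ A (φ.symm s)|}) :=
        add_le_add_right (measure_union_le _ _) _
    _ ≤ ε / 3 + (ε / 3 + ε / 3) := add_le_add b1 (add_le_add hk b3)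
    _ = ε := by
        have h33 : ε / 3 + (ε / 3 + ε / 3) = 3 * (ε / 3) := by ring
        rw [h33, ENNReal.mul_div_cancel (by norm_num) h3ne]
end

section
/- Let (S,μ) be a standard Borel probability space, and let φ and φ_n (n ∈ ℕ) be measure-class-preserving Borel automorphisms of S with φ_n → φ in the Koopman (strong operator) topology. If A_n (n ∈ ℕ) are measurable subsets of S with μ(A_n) → 0, then μ(φ_n(A_n)) → 0. -/
open MeasureTheory Filter Topology
open scoped ENNReal NNReal

/-- If `φₙ → φ` in the Koopman (strong operator) topology among
measure-class-preserving Borel automorphisms of a standard Borel probability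
space `(S, μ)`, and `Aₙ` are measurable sets with `μ Aₙ → 0`, then
`μ (φₙ(Aₙ)) → 0`. -/
theorem koopman_tendsto_images_of_null
    {S : Type*} [MeasurableSpace S] [StandardBorelSpace S]
    (μ : Measure S) [IsProbabilityMeasure μ]
    (φ : S ≃ᵐ S) (φn : ℕ → S ≃ᵐ S)
    (hφ : μ.map φ ≪ μ ∧ μ ≪ μ.map φ)
    (hφn : ∀ n, μ.map (φn n) ≪ μ ∧ μ ≪ μ.map (φn n))
    (hK : ∀ f : S → ℝ, Measurable f → Integrable (fun s => (f s) ^ 2) μ →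
      Tendsto
        (fun n => ∫ s,
          (Real.sqrt (((μ.map (φn n)).rnDeriv μ s).toReal) * f ((φn n).symm s)
            - Real.sqrt (((μ.map φ).rnDeriv μ s).toReal) * f (φ.symm s)) ^ 2 ∂μ)
        atTop (𝓝 0))
    (An : ℕ → Set S) (hAn : ∀ n, MeasurableSet (An n))
    (hconv : Tendsto (fun n => μ (An n)) atTop (𝓝 0)) :
    Tendsto (fun n => μ (⇑(φn n) '' An n)) atTop (𝓝 0) := by
  classical
  haveI : ∀ n, IsProbabilityMeasure (μ.map (φn n)) :=
    fun n => Measure.isProbabilityMeasure_map (φn n).measurable.aemeasurable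
  haveI : IsProbabilityMeasure (μ.map φ) :=
    Measure.isProbabilityMeasure_map φ.measurable.aemeasurable
  set g : S → ℝ≥0∞ := fun s => (μ.map φ).rnDeriv μ s with hgdef
  set fn : ℕ → S → ℝ≥0∞ := fun n s => (μ.map (φn n)).rnDeriv μ s with hfndef
  have hgm : Measurable g := Measure.measurable_rnDeriv _ _
  have hfnm : ∀ n, Measurable (fn n) := fun n => Measure.measurable_rnDeriv _ _
  -- L² convergence with f = 1
  have hL2 : Tendsto (fun n => ∫ s,
      (Real.sqrt ((fn n s).toReal) - Real.sqrt ((g s).toReal)) ^ 2 ∂μ) atTop (𝓝 0) := by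
    have h1 := hK (fun _ => 1) measurable_const (by simpa using integrable_const (1:ℝ))
    simpa using h1
  -- positivity and finiteness of g
  have hgpos : ∀ᵐ s ∂μ, 0 < g s := Measure.rnDeriv_pos' hφ.2
  have hglt : ∀ᵐ s ∂μ, g s < ∞ := Measure.rnDeriv_lt_top _ _
  -- the image sets and their key property
  set B : ℕ → Set S := fun n => ⇑(φn n) '' An n with hBdef
  have hBm : ∀ n, MeasurableSet (B n) := by
    intro n
    rw [hBdef]
    simp only [MeasurableEquiv.image_eq_preimage_symm]
    exact (φn n).symm.measurable (hAn n)
  have hBint : ∀ n, ∫⁻ s in B n, fn n s ∂μ = μ (An n) := by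
    intro n
    rw [Measure.setLIntegral_rnDeriv (hφn n).1]
    rw [Measure.map_apply (φn n).measurable (hBm n), hBdef]
    rw [Set.preimage_image_eq _ (φn n).injective]
  -- diff functions
  set d : ℕ → S → ℝ := fun n s => (Real.sqrt ((fn n s).toReal) - Real.sqrt ((g s).toReal)) ^ 2
    with hddef
  have hdm : ∀ n, Measurable (d n) := fun n =>
    (((hfnm n).ennreal_toReal.sqrt.sub hgm.ennreal_toReal.sqrt).pow_const 2)
  have hdnn : ∀ n s, 0 ≤ d n s := fun n s => sq_nonneg _
  have hdint : ∀ n, Integrable (d n) μ := by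
    intro n
    refine Integrable.mono'
      (((Measure.integrable_toReal_rnDeriv (μ := μ.map (φn n)) (ν := μ)).const_mul 2).add
        ((Measure.integrable_toReal_rnDeriv (μ := μ.map φ) (ν := μ)).const_mul 2))
      (hdm n).aestronglyMeasurable ?_
    filter_upwards with s
    rw [Real.norm_of_nonneg (hdnn n s)]
    have h1 : Real.sqrt ((fn n s).toReal) ^ 2 = (fn n s).toReal :=
      Real.sq_sqrt ENNReal.toReal_nonneg
    have h2 : Real.sqrt ((g s).toReal) ^ 2 = (g s).toReal :=
      Real.sq_sqrt ENNReal.toReal_nonneg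
    have := sq_nonneg (Real.sqrt ((fn n s).toReal) + Real.sqrt ((g s).toReal))
    simp only [hddef, Pi.add_apply]
    nlinarith
  -- main argument
  rw [ENNReal.tendsto_atTop_zero]
  intro ε hε
  set ε' : ℝ≥0∞ := min ε 1 with hε'def
  have hε'pos : 0 < ε' := lt_min hε zero_lt_one
  have hε'lt : ε' < ∞ := lt_of_le_of_lt (min_le_right _ _) ENNReal.one_lt_top
  suffices h : ∃ N, ∀ n ≥ N, μ (B n) ≤ ε' by
    obtain ⟨N, hN⟩ := h
    exact ⟨N, fun n hn => (hN n hn).trans (min_le_left _ _)⟩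
  have hc3pos : 0 < ε' / 3 := ENNReal.div_pos hε'pos.ne' (by norm_num)
  have hc3lt : ε' / 3 < ∞ := ENNReal.div_lt_top hε'lt.ne (by norm_num)
  -- choose threshold t
  obtain ⟨t, ht0, htlt, hμt⟩ : ∃ t : ℝ≥0∞, 0 < t ∧ t < ∞ ∧ μ {s | g s < t} ≤ ε' / 3 := by
    have hanti : Antitone (fun k : ℕ => {s | g s < (↑(k+1))⁻¹}) := by
      intro j k hjk s hs
      exact lt_of_lt_of_le hs (ENNReal.inv_le_inv.mpr (by exact_mod_cast Nat.succ_le_succ hjk))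
    have hmeas : ∀ k : ℕ, NullMeasurableSet {s | g s < (↑(k+1):ℝ≥0∞)⁻¹} μ :=
      fun k => (measurableSet_lt hgm measurable_const).nullMeasurableSet
    have hnull : μ (⋂ k : ℕ, {s | g s < (↑(k+1):ℝ≥0∞)⁻¹}) = 0 := by
      have hsub : (⋂ k : ℕ, {s | g s < (↑(k+1):ℝ≥0∞)⁻¹}) ⊆ {s | ¬ 0 < g s} := by
        intro s hs
        simp only [Set.mem_iInter, Set.mem_setOf_eq] at hs ⊢
        push_neg
        have htend : Tendsto (fun k : ℕ => ((↑(k+1):ℝ≥0∞))⁻¹) atTop (𝓝 0) := by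
          have h0 : Tendsto (fun k : ℕ => ((k:ℝ≥0∞))⁻¹) atTop (𝓝 0) :=
            ENNReal.tendsto_inv_nat_nhds_zero
          exact h0.comp (tendsto_add_atTop_nat 1)
        exact ge_of_tendsto' htend fun k => (hs k).le
      exact measure_mono_null hsub hgpos
    have htends := tendsto_measure_iInter_atTop hmeas hanti ⟨0, measure_ne_top μ _⟩
    rw [hnull] at htends
    have := (ENNReal.tendsto_atTop_zero.mp htends) (ε'/3) hc3pos
    obtain ⟨k, hk⟩ := this
    exact ⟨(↑(k+1):ℝ≥0∞)⁻¹, by simp, by simp, hk k le_rfl⟩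
  set u : ℝ≥0∞ := ENNReal.ofReal (t.toReal / 4) with hudef
  have ht0' : 0 < t.toReal := ENNReal.toReal_pos ht0.ne' htlt.ne
  have hu0 : 0 < u := ENNReal.ofReal_pos.mpr (by linarith)
  have hulttop : u < ∞ := ENNReal.ofReal_lt_top
  -- Chebyshev sets
  set G : ℕ → Set S := fun n => {s | t.toReal / 4 ≤ d n s} with hGdef
  have hGle : ∀ n, ENNReal.ofReal (t.toReal / 4) * μ (G n) ≤ ENNReal.ofReal (∫ s, d n s ∂μ) := by
    intro n
    have h1 := mul_meas_ge_le_lintegral₀ (μ := μ)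
      (f := fun s => ENNReal.ofReal (d n s)) ((hdm n).ennreal_ofReal.aemeasurable)
      (ENNReal.ofReal (t.toReal / 4))
    rw [← ofReal_integral_eq_lintegral_ofReal (hdint n)
      (Filter.Eventually.of_forall (hdnn n))] at h1
    have hset : {s | ENNReal.ofReal (t.toReal / 4) ≤ ENNReal.ofReal (d n s)} = G n := by
      ext s
      simp only [Set.mem_setOf_eq, hGdef]
      exact ENNReal.ofReal_le_ofReal_iff (hdnn n s)
    rwa [hset] at h1
  -- eventually ∫ d n < (ε'/3).toReal * (t.toReal/4)
  have hev1 : ∀ᶠ n in atTop, μ (G n) ≤ ε' / 3 := by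
    have hpos : (0:ℝ) < (ε'/3).toReal * (t.toReal / 4) := by
      have := ENNReal.toReal_pos hc3pos.ne' hc3lt.ne
      positivity
    filter_upwards [hL2.eventually_lt_const hpos] with n hn
    have h1 : ENNReal.ofReal (t.toReal/4) * μ (G n) <
        ENNReal.ofReal ((ε'/3).toReal * (t.toReal/4)) :=
      (hGle n).trans_lt ((ENNReal.ofReal_lt_ofReal_iff hpos).mpr hn)
    rw [ENNReal.ofReal_mul ENNReal.toReal_nonneg, ENNReal.ofReal_toReal hc3lt.ne,
      mul_comm (ENNReal.ofReal (t.toReal/4))] at h1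
    exact ((ENNReal.mul_lt_mul_iff_left (ENNReal.ofReal_pos.mpr (by linarith)).ne'
      ENNReal.ofReal_lt_top.ne).mp h1).le
  -- eventually the large-density part is small
  have hev2 : ∀ᶠ n in atTop, μ (B n ∩ {s | u ≤ fn n s}) ≤ ε' / 3 := by
    have huc : 0 < u * (ε' / 3) := ENNReal.mul_pos hu0.ne' hc3pos.ne'
    filter_upwards [hconv.eventually_lt_const huc] with n hn
    have key : u * μ (B n ∩ {s | u ≤ fn n s}) ≤ μ (An n) := by
      rw [← hBint n]
      calc u * μ (B n ∩ {s | u ≤ fn n s})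
          = ∫⁻ _ in B n ∩ {s | u ≤ fn n s}, u ∂μ := by
            rw [setLIntegral_const, mul_comm]
        _ ≤ ∫⁻ s in B n ∩ {s | u ≤ fn n s}, fn n s ∂μ := by
            refine setLIntegral_mono (hfnm n) fun s hs => hs.2
        _ ≤ ∫⁻ s in B n, fn n s ∂μ :=
            lintegral_mono_set Set.inter_subset_left
    have := key.trans_lt hn
    rw [ENNReal.mul_lt_mul_iff_right hu0.ne' hulttop.ne] at this
    exact this.le
  -- a.e. inclusion : {fn n < u} ⊆ {g < t} ∪ G n  a.e.
  have hincl : ∀ n, μ {s | fn n s < u} ≤ μ {s | g s < t} + μ (G n) := by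
    intro n
    refine le_trans (measure_mono_ae ?_) (measure_union_le _ _)
    filter_upwards [hglt] with s hsfin hs
    by_cases hgt : g s < t
    · exact Or.inl hgt
    · right
      push_neg at hgt
      have hfns : fn n s ≠ ∞ := (hs.trans hulttop).ne
      have hs' : fn n s < u := hs
      rw [hudef] at hs'
      have h1 : (fn n s).toReal < t.toReal / 4 :=
        (ENNReal.lt_ofReal_iff_toReal_lt hfns).mp hs'
      have h2 : t.toReal ≤ (g s).toReal :=
        (ENNReal.toReal_le_toReal htlt.ne hsfin.ne).mpr hgt
      have ha : Real.sqrt ((fn n s).toReal) < Real.sqrt (t.toReal) / 2 := by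
        have : Real.sqrt ((fn n s).toReal) < Real.sqrt (t.toReal / 4) :=
          Real.sqrt_lt_sqrt ENNReal.toReal_nonneg h1
        rwa [Real.sqrt_div ENNReal.toReal_nonneg,
          show Real.sqrt 4 = 2 by
            rw [show (4:ℝ) = 2^2 by norm_num, Real.sqrt_sq (by norm_num)]] at this
      have hb : Real.sqrt (t.toReal) ≤ Real.sqrt ((g s).toReal) :=
        Real.sqrt_le_sqrt h2
      have hsq : Real.sqrt t.toReal ^ 2 = t.toReal := Real.sq_sqrt ht0'.le
      have hann : 0 ≤ Real.sqrt ((fn n s).toReal) := Real.sqrt_nonneg _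
      show t.toReal / 4 ≤ d n s
      simp only [hddef]
      nlinarith [Real.sqrt_nonneg t.toReal]
  -- combine
  rw [← eventually_atTop]
  filter_upwards [hev1, hev2] with n h1 h2
  have hsplit : μ (B n) ≤ μ (B n ∩ {s | u ≤ fn n s}) + μ {s | fn n s < u} := by
    refine le_trans (measure_mono ?_) (measure_union_le _ _)
    intro s hs
    by_cases hfu : u ≤ fn n s
    · exact Or.inl ⟨hs, hfu⟩
    · exact Or.inr (lt_of_not_ge hfu)
  calc μ (B n) ≤ μ (B n ∩ {s | u ≤ fn n s}) + μ {s | fn n s < u} := hsplit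
    _ ≤ ε' / 3 + (μ {s | g s < t} + μ (G n)) := add_le_add h2 (hincl n)
    _ ≤ ε' / 3 + (ε' / 3 + ε' / 3) := add_le_add le_rfl (add_le_add hμt h1)
    _ = ε' := by rw [← add_assoc, ENNReal.add_thirds]
end

section
/- Let (S,d_S) be a separable metric space equipped with its Borel σ-algebra and a Borel probability measure μ making (S,μ) a standard Borel probability space, and let φ and φ_n (n ∈ ℕ) be measure-class-preserving Borel automorphisms of S. If φ_n → φ in the Koopman (strong operator) topology, then φ_n → φ in measure; that is, for every ε > 0, μ{ s ∈ S : d_S(φ_n(s), φ(s)) > ε } → 0 as n → ∞. -/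
open MeasureTheory Filter Topology

/-- Cauchy–Schwarz inequality for real integrals. -/
private lemma my_integral_CS {α : Type*} [MeasurableSpace α] (μ : Measure α)
    (f g : α → ℝ)
    (hf2 : Integrable (fun s => f s ^ 2) μ) (hg2 : Integrable (fun s => g s ^ 2) μ)
    (hfg : Integrable (fun s => f s * g s) μ) :
    ∫ s, f s * g s ∂μ ≤ Real.sqrt (∫ s, f s ^ 2 ∂μ) * Real.sqrt (∫ s, g s ^ 2 ∂μ) := by
  set A := ∫ s, f s ^ 2 ∂μ with hA_def
  set B := ∫ s, g s ^ 2 ∂μ with hB_def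
  set C := ∫ s, f s * g s ∂μ with hC_def
  have hA : 0 ≤ A := integral_nonneg fun s => sq_nonneg _
  have key : ∀ t : ℝ, 0 ≤ A * (t * t) + (-2 * C) * t + B := by
    intro t
    have h1 : ∀ s, (t * f s - g s) ^ 2
        = t ^ 2 * f s ^ 2 - 2 * t * (f s * g s) + g s ^ 2 := by
      intro s; ring
    have h2 : 0 ≤ ∫ s, (t * f s - g s) ^ 2 ∂μ := integral_nonneg fun s => sq_nonneg _
    rw [integral_congr_ae (Filter.Eventually.of_forall h1)] at h2
    have hInt1 : Integrable (fun a => t ^ 2 * f a ^ 2 - 2 * t * (f a * g a)) μ :=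
      (hf2.const_mul _).sub (hfg.const_mul _)
    rw [integral_add hInt1 hg2,
      integral_sub (hf2.const_mul (t ^ 2)) (hfg.const_mul (2 * t)),
      integral_const_mul, integral_const_mul] at h2
    nlinarith [h2]
  have hd := discrim_le_zero key
  rw [discrim] at hd
  have hC2 : C ^ 2 ≤ A * B := by nlinarith [hd]
  calc C ≤ |C| := le_abs_self C
    _ = Real.sqrt (C ^ 2) := (Real.sqrt_sq_eq_abs C).symm
    _ ≤ Real.sqrt (A * B) := Real.sqrt_le_sqrt hC2
    _ = Real.sqrt A * Real.sqrt B := Real.sqrt_mul hA B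

/-- The key quantitative bound: if `B` is measurable then the measure of
`B \ ψ⁻¹(φ(B))` is controlled by the Koopman-distance between `ψ` and `φ`
tested on the indicator of `B`. -/
private lemma koopman_set_bound {S : Type*} [MeasurableSpace S]
    (μ : Measure S) [IsProbabilityMeasure μ]
    (φ ψ : S ≃ᵐ S) (hφ : μ.map φ ≪ μ) (hψ : μ.map ψ ≪ μ)
    (B : Set S) (hB : MeasurableSet B) :
    (μ (B \ ψ ⁻¹' (φ.symm ⁻¹' B))).toReal ≤
      2 * Real.sqrt ((μ B).toReal *
        ∫ s, (Real.sqrt (((μ.map ψ).rnDeriv μ s).toReal) * (B.indicator 1 (ψ.symm s))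
          - Real.sqrt (((μ.map φ).rnDeriv μ s).toReal) * (B.indicator 1 (φ.symm s))) ^ 2 ∂μ) := by
  have hPφ : IsProbabilityMeasure (μ.map φ) := Measure.isProbabilityMeasure_map φ.measurable.aemeasurable
  have hPψ : IsProbabilityMeasure (μ.map ψ) := Measure.isProbabilityMeasure_map ψ.measurable.aemeasurable
  set d : S → ℝ := fun s => ((μ.map φ).rnDeriv μ s).toReal with hd_def
  set e : S → ℝ := fun s => ((μ.map ψ).rnDeriv μ s).toReal with he_def
  have hd_meas : Measurable d := (Measure.measurable_rnDeriv _ _).ennreal_toReal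
  have he_meas : Measurable e := (Measure.measurable_rnDeriv _ _).ennreal_toReal
  have hd_nn : ∀ s, 0 ≤ d s := fun s => ENNReal.toReal_nonneg
  have he_nn : ∀ s, 0 ≤ e s := fun s => ENNReal.toReal_nonneg
  have hd_int : Integrable d μ := Measure.integrable_toReal_rnDeriv
  have he_int : Integrable e μ := Measure.integrable_toReal_rnDeriv
  set C : Set S := φ.symm ⁻¹' B with hC_def
  set Cn : Set S := ψ.symm ⁻¹' B with hCn_def
  have hCm : MeasurableSet C := φ.symm.measurable hB
  have hCnm : MeasurableSet Cn := ψ.symm.measurable hB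
  -- indicator composition
  have hcomp : ∀ s, B.indicator (1 : S → ℝ) (φ.symm s) = C.indicator (1 : S → ℝ) s := by
    intro s
    by_cases h : φ.symm s ∈ B <;> simp [Set.indicator_apply, hC_def, h]
  have hcompn : ∀ s, B.indicator (1 : S → ℝ) (ψ.symm s) = Cn.indicator (1 : S → ℝ) s := by
    intro s
    by_cases h : ψ.symm s ∈ B <;> simp [Set.indicator_apply, hCn_def, h]
  set u : S → ℝ := fun s => Real.sqrt (d s) * C.indicator 1 s with hu_def
  set un : S → ℝ := fun s => Real.sqrt (e s) * Cn.indicator 1 s with hun_def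
  have hu_meas : Measurable u := (hd_meas.sqrt).mul (measurable_one.indicator hCm)
  have hun_meas : Measurable un := (he_meas.sqrt).mul (measurable_one.indicator hCnm)
  -- squares
  have hu_sq : ∀ s, u s ^ 2 = C.indicator d s := by
    intro s
    by_cases h : s ∈ C <;>
      simp [hu_def, Set.indicator_of_mem, Set.indicator_of_notMem, h, Real.sq_sqrt (hd_nn s),
        mul_pow]
  have hun_sq : ∀ s, un s ^ 2 = Cn.indicator e s := by
    intro s
    by_cases h : s ∈ Cn <;>
      simp [hun_def, Set.indicator_of_mem, Set.indicator_of_notMem, h, Real.sq_sqrt (he_nn s),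
        mul_pow]
  -- set integrals of densities
  have hint_d : ∀ (X : Set S), MeasurableSet X →
      ∫ s, X.indicator d s ∂μ = (μ (φ ⁻¹' X)).toReal := by
    intro X hX
    rw [integral_indicator hX, Measure.setIntegral_toReal_rnDeriv hφ X,
      measureReal_def, MeasurableEquiv.map_apply]
  have hint_e : ∀ (X : Set S), MeasurableSet X →
      ∫ s, X.indicator e s ∂μ = (μ (ψ ⁻¹' X)).toReal := by
    intro X hX
    rw [integral_indicator hX, Measure.setIntegral_toReal_rnDeriv hψ X,
      measureReal_def, MeasurableEquiv.map_apply]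
  -- integrabilities
  have hu2_int : Integrable (fun s => u s ^ 2) μ := by
    rw [show (fun s => u s ^ 2) = C.indicator d from funext hu_sq]
    exact hd_int.indicator hCm
  have hun2_int : Integrable (fun s => un s ^ 2) μ := by
    rw [show (fun s => un s ^ 2) = Cn.indicator e from funext hun_sq]
    exact he_int.indicator hCnm
  have hmul_int : ∀ (v w : S → ℝ), Measurable v → Measurable w →
      Integrable (fun s => v s ^ 2) μ → Integrable (fun s => w s ^ 2) μ →
      Integrable (fun s => v s * w s) μ := by
    intro v w hv hw hv2 hw2
    have hg_int : Integrable (fun s => (v s ^ 2 + w s ^ 2) / 2) μ := (hv2.add hw2).div_const 2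
    refine Integrable.mono' hg_int ((hv.mul hw).aestronglyMeasurable) ?_
    filter_upwards with s
    rw [Real.norm_eq_abs, abs_mul]
    nlinarith [sq_nonneg (|v s| - |w s|), sq_abs (v s), sq_abs (w s), abs_nonneg (v s),
      abs_nonneg (w s)]
  have huun_int : Integrable (fun s => un s * u s) μ :=
    hmul_int un u hun_meas hu_meas hun2_int hu2_int
  -- value of ∫ u²
  have hBpre : φ ⁻¹' C = B := by
    rw [hC_def, ← Set.preimage_comp]
    simp
  have hBpren : ψ ⁻¹' Cn = B := by
    rw [hCn_def, ← Set.preimage_comp]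
    simp
  have hu2_val : ∫ s, u s ^ 2 ∂μ = (μ B).toReal := by
    rw [show (fun s => u s ^ 2) = C.indicator d from funext hu_sq, hint_d C hCm, hBpre]
  set m : ℝ := (μ B).toReal with hm_def
  have hm0 : 0 ≤ m := ENNReal.toReal_nonneg
  set I : ℝ := ∫ s, (un s - u s) ^ 2 ∂μ with hI_def
  have hI0 : 0 ≤ I := integral_nonneg fun s => sq_nonneg _
  have hsub2_int : Integrable (fun s => (un s - u s) ^ 2) μ := by
    have : (fun s => (un s - u s) ^ 2)
        = fun s => un s ^ 2 - 2 * (un s * u s) + u s ^ 2 := by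
      funext s; ring
    rw [this]
    exact (hun2_int.sub (huun_int.const_mul 2)).add hu2_int
  -- F3/F4 : m - ∫ un u ≤ √I √m
  set p : ℝ := ∫ s, un s * u s ∂μ with hp_def
  have hF34 : m - p ≤ Real.sqrt I * Real.sqrt m := by
    have hexp : (fun s => (u s - un s) * u s) = fun s => u s ^ 2 - un s * u s := by
      funext s; ring
    have hint : Integrable (fun s => (u s - un s) * u s) μ := by
      rw [hexp]; exact hu2_int.sub huun_int
    have hval : ∫ s, (u s - un s) * u s ∂μ = m - p := by
      rw [hexp, integral_sub hu2_int huun_int, hu2_val]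
    have hCS := my_integral_CS μ (fun s => u s - un s) u ?_ hu2_int hint
    · rw [hval] at hCS
      have hsq_eq : ∫ s, (u s - un s) ^ 2 ∂μ = I := by
        rw [hI_def]
        exact integral_congr_ae (Filter.Eventually.of_forall fun s => by ring)
      rwa [hsq_eq, hu2_val] at hCS
    · have : (fun s => (u s - un s) ^ 2) = fun s => (un s - u s) ^ 2 := by
        funext s; ring
      rw [this]; exact hsub2_int
  -- F2 : p ≤ √a √m
  set a : ℝ := (μ (B ∩ ψ ⁻¹' C)).toReal with ha_def
  have ha0 : 0 ≤ a := ENNReal.toReal_nonneg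
  have hF2 : p ≤ Real.sqrt a * Real.sqrt m := by
    set v : S → ℝ := fun s => Real.sqrt (e s) * (Cn ∩ C).indicator 1 s with hv_def
    set w : S → ℝ := fun s => Real.sqrt (d s) * (Cn ∩ C).indicator 1 s with hw_def
    have hCCm : MeasurableSet (Cn ∩ C) := hCnm.inter hCm
    have hv_meas : Measurable v := (he_meas.sqrt).mul (measurable_one.indicator hCCm)
    have hw_meas : Measurable w := (hd_meas.sqrt).mul (measurable_one.indicator hCCm)
    have hv_sq : ∀ s, v s ^ 2 = (Cn ∩ C).indicator e s := by
      intro s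
      by_cases h : s ∈ Cn ∩ C <;>
        simp [hv_def, Set.indicator_of_mem, Set.indicator_of_notMem, h, Real.sq_sqrt (he_nn s),
          mul_pow]
    have hw_sq : ∀ s, w s ^ 2 = (Cn ∩ C).indicator d s := by
      intro s
      by_cases h : s ∈ Cn ∩ C <;>
        simp [hw_def, Set.indicator_of_mem, Set.indicator_of_notMem, h, Real.sq_sqrt (hd_nn s),
          mul_pow]
    have hv2_int : Integrable (fun s => v s ^ 2) μ := by
      rw [show (fun s => v s ^ 2) = (Cn ∩ C).indicator e from funext hv_sq]
      exact he_int.indicator hCCm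
    have hw2_int : Integrable (fun s => w s ^ 2) μ := by
      rw [show (fun s => w s ^ 2) = (Cn ∩ C).indicator d from funext hw_sq]
      exact hd_int.indicator hCCm
    have hvw_int : Integrable (fun s => v s * w s) μ :=
      hmul_int v w hv_meas hw_meas hv2_int hw2_int
    have hpt : ∀ s, un s * u s = v s * w s := by
      intro s
      by_cases h1 : s ∈ Cn <;> by_cases h2 : s ∈ C <;>
        simp [hun_def, hu_def, hv_def, hw_def, Set.indicator_apply, h1, h2,
          Set.mem_inter_iff]
    have hp_eq : p = ∫ s, v s * w s ∂μ := by
      rw [hp_def]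
      exact integral_congr_ae (Filter.Eventually.of_forall hpt)
    have hCS := my_integral_CS μ v w hv2_int hw2_int hvw_int
    have hv2_val : ∫ s, v s ^ 2 ∂μ = a := by
      rw [show (fun s => v s ^ 2) = (Cn ∩ C).indicator e from funext hv_sq,
        hint_e _ hCCm, ha_def, Set.preimage_inter, hBpren]
    have hw2_val : ∫ s, w s ^ 2 ∂μ = (μ (φ ⁻¹' Cn ∩ B)).toReal := by
      rw [show (fun s => w s ^ 2) = (Cn ∩ C).indicator d from funext hw_sq,
        hint_d _ hCCm, Set.preimage_inter, hBpre]
    have hw2_le : ∫ s, w s ^ 2 ∂μ ≤ m := by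
      rw [hw2_val, hm_def]
      exact ENNReal.toReal_mono (measure_ne_top μ B)
        (measure_mono Set.inter_subset_right)
    calc p = ∫ s, v s * w s ∂μ := hp_eq
      _ ≤ Real.sqrt (∫ s, v s ^ 2 ∂μ) * Real.sqrt (∫ s, w s ^ 2 ∂μ) := hCS
      _ ≤ Real.sqrt a * Real.sqrt m := by
          rw [hv2_val]
          exact mul_le_mul_of_nonneg_left (Real.sqrt_le_sqrt hw2_le) (Real.sqrt_nonneg a)
  -- combine: m - a ≤ 2 √(m I)
  have hcomb : m - a ≤ 2 * (Real.sqrt m * Real.sqrt I) := by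
    have h1 : m - Real.sqrt I * Real.sqrt m ≤ Real.sqrt a * Real.sqrt m := le_trans
      (by linarith [hF34, hF2]) (le_refl _)
    have hsm : Real.sqrt m ^ 2 = m := Real.sq_sqrt hm0
    have hsa : Real.sqrt a ^ 2 = a := Real.sq_sqrt ha0
    have hsm0 : 0 ≤ Real.sqrt m := Real.sqrt_nonneg m
    have hsa0 : 0 ≤ Real.sqrt a := Real.sqrt_nonneg a
    have hsI0 : 0 ≤ Real.sqrt I := Real.sqrt_nonneg I
    nlinarith [sq_nonneg (Real.sqrt m - Real.sqrt a), h1]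
  -- conclude
  have hsplit : (μ (B ∩ ψ ⁻¹' C)).toReal + (μ (B \ ψ ⁻¹' C)).toReal = m := by
    rw [← ENNReal.toReal_add (measure_ne_top μ _) (measure_ne_top μ _), hm_def]
    congr 1
    exact measure_inter_add_diff B (ψ.measurable hCm)
  have hfin : (μ (B \ ψ ⁻¹' C)).toReal ≤ 2 * (Real.sqrt m * Real.sqrt I) := by
    have : (μ (B \ ψ ⁻¹' C)).toReal = m - a := by
      rw [← hsplit, ha_def]; ring
    rw [this]; exact hcomb
  have hrw : (∫ s, (Real.sqrt (e s) * (B.indicator 1 (ψ.symm s))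
      - Real.sqrt (d s) * (B.indicator 1 (φ.symm s))) ^ 2 ∂μ) = I := by
    rw [hI_def]
    refine integral_congr_ae (Filter.Eventually.of_forall fun s => ?_)
    simp only [hcomp, hcompn, hu_def, hun_def]
  calc (μ (B \ ψ ⁻¹' (φ.symm ⁻¹' B))).toReal
      ≤ 2 * (Real.sqrt m * Real.sqrt I) := hfin
    _ = 2 * Real.sqrt (m * I) := by rw [Real.sqrt_mul hm0]
    _ = 2 * Real.sqrt ((μ B).toReal *
        ∫ s, (Real.sqrt (e s) * (B.indicator 1 (ψ.symm s))
          - Real.sqrt (d s) * (B.indicator 1 (φ.symm s))) ^ 2 ∂μ) := by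
        rw [hrw, hm_def]

/-- If `(S, d_S)` is a separable metric space with its Borel
σ-algebra, `(S, μ)` is a standard Borel probability space, and `φₙ → φ` in the
Koopman (strong operator) topology among measure-class-preserving Borel
automorphisms, then `φₙ → φ` in measure. -/
theorem koopman_convergence_implies_convergence_in_measure
    {S : Type*} [MetricSpace S] [TopologicalSpace.SeparableSpace S]
    [MeasurableSpace S] [BorelSpace S] [StandardBorelSpace S]
    (μ : Measure S) [IsProbabilityMeasure μ]
    (φ : S ≃ᵐ S) (φn : ℕ → S ≃ᵐ S)
    (hφ : μ.map φ ≪ μ ∧ μ ≪ μ.map φ)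
    (hφn : ∀ n, μ.map (φn n) ≪ μ ∧ μ ≪ μ.map (φn n))
    (hK : ∀ f : S → ℝ, Measurable f → Integrable (fun s => (f s) ^ 2) μ →
      Tendsto
        (fun n => ∫ s,
          (Real.sqrt (((μ.map (φn n)).rnDeriv μ s).toReal) * f ((φn n).symm s)
            - Real.sqrt (((μ.map φ).rnDeriv μ s).toReal) * f (φ.symm s)) ^ 2 ∂μ)
        atTop (𝓝 0)) :
    ∀ ε > (0 : ℝ),
      Tendsto (fun n => μ {s : S | dist (φn n s) (φ s) > ε}) atTop (𝓝 0) := by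
  intro ε hε
  have hne : Nonempty S := by
    by_contra h
    rw [not_nonempty_iff] at h
    have h1 : μ Set.univ = 1 := measure_univ
    rw [Set.univ_eq_empty_iff.mpr h, measure_empty] at h1
    exact zero_ne_one h1
  set x : ℕ → S := TopologicalSpace.denseSeq S with hx_def
  have hx : DenseRange x := TopologicalSpace.denseRange_denseSeq S
  set Bl : ℕ → Set S := fun i => Metric.ball (x i) (ε / 2) with hBl_def
  have hBlm : ∀ i, MeasurableSet (Bl i) := fun i => Metric.isOpen_ball.measurableSet
  -- Step 1 : each ball's preimage difference tends to 0
  have hstep : ∀ i, Tendsto (fun n => μ (φ ⁻¹' Bl i \ (φn n) ⁻¹' Bl i)) atTop (𝓝 0) := by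
    intro i
    have hBm : MeasurableSet (φ ⁻¹' Bl i) := φ.measurable (hBlm i)
    set B : Set S := φ ⁻¹' Bl i with hB_def
    set f : S → ℝ := B.indicator 1 with hf_def
    have hf_meas : Measurable f := measurable_one.indicator hBm
    have hf_sq : (fun s => f s ^ 2) = f := by
      funext s
      by_cases h : s ∈ B <;> simp [hf_def, Set.indicator_apply, h]
    have hf_int : Integrable (fun s => f s ^ 2) μ := by
      rw [hf_sq, hf_def]
      exact (integrable_const (1 : ℝ)).indicator hBm
    have hI := hK f hf_meas hf_int
    set In : ℕ → ℝ := fun n => ∫ s,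
      (Real.sqrt (((μ.map (φn n)).rnDeriv μ s).toReal) * f ((φn n).symm s)
        - Real.sqrt (((μ.map φ).rnDeriv μ s).toReal) * f (φ.symm s)) ^ 2 ∂μ with hIn_def
    have hset : φ.symm ⁻¹' B = Bl i := by
      rw [hB_def, ← Set.preimage_comp]
      simp
    have hbound : ∀ n, (μ (φ ⁻¹' Bl i \ (φn n) ⁻¹' Bl i)).toReal
        ≤ 2 * Real.sqrt ((μ B).toReal * In n) := by
      intro n
      have h := koopman_set_bound μ φ (φn n) hφ.1 (hφn n).1 B hBm
      rw [hset] at h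
      simpa only [hIn_def, ← hf_def] using h
    have hg : Tendsto (fun n => 2 * Real.sqrt ((μ B).toReal * In n)) atTop (𝓝 0) := by
      have h1 : Tendsto (fun n => (μ B).toReal * In n) atTop (𝓝 ((μ B).toReal * 0)) :=
        hI.const_mul _
      rw [mul_zero] at h1
      have h2 := (Real.continuous_sqrt.tendsto (0 : ℝ)).comp h1
      rw [Real.sqrt_zero] at h2
      have h3 := h2.const_mul (2 : ℝ)
      rwa [mul_zero] at h3
    have htoReal : Tendsto (fun n => (μ (φ ⁻¹' Bl i \ (φn n) ⁻¹' Bl i)).toReal) atTop (𝓝 0) :=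
      squeeze_zero (fun n => ENNReal.toReal_nonneg) hbound hg
    have := (ENNReal.tendsto_toReal_iff (fun n => measure_ne_top μ _)
      (by simp : (0 : ENNReal) ≠ ⊤)).mp (by simpa using htoReal)
    simpa using this
  -- Step 2 : assemble
  rw [ENNReal.tendsto_atTop_zero]
  intro δ hδ
  set δ' : ENNReal := min δ 1 with hδ'_def
  have hδ'0 : 0 < δ' := lt_min hδ zero_lt_one
  have hδ'2 : 0 < δ' / 2 := ENNReal.div_pos hδ'0.ne' (by norm_num)
  -- cover
  have hcover : (⋃ i, Bl i) = Set.univ := by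
    ext s
    simp only [Set.mem_iUnion, Set.mem_univ, iff_true]
    obtain ⟨i, hi⟩ := hx.exists_dist_lt s (by linarith : (0 : ℝ) < ε / 2)
    exact ⟨i, Metric.mem_ball.mpr hi⟩
  set T : ℕ → Set S := fun k => ⋃ i ∈ Finset.range k, Bl i with hT_def
  have hcompl_tendsto : Tendsto (fun k => μ ((φ ⁻¹' T k)ᶜ)) atTop (𝓝 0) := by
    have hanti : Antitone fun k => (φ ⁻¹' T k)ᶜ := by
      intro k l hkl
      apply Set.compl_subset_compl.mpr
      apply Set.preimage_mono
      intro s hs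
      simp only [hT_def, Set.mem_iUnion, Finset.mem_range] at hs ⊢
      obtain ⟨j, hj, hjs⟩ := hs
      exact ⟨j, lt_of_lt_of_le hj hkl, hjs⟩
    have hmeas : ∀ k, NullMeasurableSet ((φ ⁻¹' T k)ᶜ) μ := by
      intro k
      exact (MeasurableSet.compl (φ.measurable
        (MeasurableSet.biUnion (Finset.range k).countable_toSet
          fun i _ => hBlm i))).nullMeasurableSet
    have h := tendsto_measure_iInter_atTop hmeas hanti ⟨0, measure_ne_top μ _⟩
    have hiInter : (⋂ k, (φ ⁻¹' T k)ᶜ) = ∅ := by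
      rw [← Set.compl_iUnion, ← Set.preimage_iUnion]
      have hUT : (⋃ k, T k) = Set.univ := by
        rw [← hcover]
        apply Set.Subset.antisymm
        · exact Set.iUnion_subset fun k => Set.iUnion₂_subset fun i _ => Set.subset_iUnion Bl i
        · intro s hs
          obtain ⟨i, hi⟩ := Set.mem_iUnion.mp hs
          exact Set.mem_iUnion.mpr ⟨i + 1,
            Set.mem_biUnion (Finset.mem_range.mpr (Nat.lt_succ_self i)) hi⟩
      rw [hUT]
      simp
    rw [hiInter, measure_empty] at h
    exact h
  obtain ⟨k, hk⟩ := (hcompl_tendsto.eventually_lt_const hδ'2).exists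
  have hsum : Tendsto (fun n => ∑ i ∈ Finset.range k, μ (φ ⁻¹' Bl i \ (φn n) ⁻¹' Bl i))
      atTop (𝓝 0) := by
    have := tendsto_finset_sum (Finset.range k) (fun i _ => hstep i)
    simpa using this
  obtain ⟨N, hN⟩ := eventually_atTop.mp (hsum.eventually_lt_const hδ'2)
  refine ⟨N, fun n hn => ?_⟩
  have hsubset : {s : S | dist (φn n s) (φ s) > ε} ⊆
      (φ ⁻¹' T k)ᶜ ∪ ⋃ i ∈ Finset.range k, (φ ⁻¹' Bl i \ (φn n) ⁻¹' Bl i) := by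
    intro s hs
    by_cases hT : φ s ∈ T k
    · right
      simp only [hT_def, Set.mem_iUnion, Finset.mem_range] at hT
      obtain ⟨i, hik, hmem⟩ := hT
      refine Set.mem_iUnion₂.mpr ⟨i, Finset.mem_range.mpr hik, Set.mem_preimage.mpr hmem, ?_⟩
      intro hc
      have hc' : dist (φn n s) (x i) < ε / 2 := Metric.mem_ball.mp (Set.mem_preimage.mp hc)
      have hmem' : dist (φ s) (x i) < ε / 2 := Metric.mem_ball.mp hmem
      have hs' : dist (φn n s) (φ s) > ε := hs
      have htri : dist (φn n s) (φ s) ≤ dist (φn n s) (x i) + dist (x i) (φ s) :=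
        dist_triangle _ _ _
      rw [dist_comm (x i) (φ s)] at htri
      linarith
    · left
      exact hT
  calc μ {s : S | dist (φn n s) (φ s) > ε}
      ≤ μ ((φ ⁻¹' T k)ᶜ ∪ ⋃ i ∈ Finset.range k, (φ ⁻¹' Bl i \ (φn n) ⁻¹' Bl i)) :=
        measure_mono hsubset
    _ ≤ μ ((φ ⁻¹' T k)ᶜ) + μ (⋃ i ∈ Finset.range k, (φ ⁻¹' Bl i \ (φn n) ⁻¹' Bl i)) :=
        measure_union_le _ _
    _ ≤ μ ((φ ⁻¹' T k)ᶜ) + ∑ i ∈ Finset.range k, μ (φ ⁻¹' Bl i \ (φn n) ⁻¹' Bl i) :=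
        add_le_add le_rfl (measure_biUnion_finset_le _ _)
    _ ≤ δ' / 2 + δ' / 2 := add_le_add hk.le (hN n hn).le
    _ = δ' := ENNReal.add_halves δ'
    _ ≤ δ := min_le_left δ 1
end

section
/- Let (S,μ) be a standard Borel probability space, let (X,d) be a separable metric space, and let φ and φ_n (n ∈ ℕ) be measure-class-preserving Borel automorphisms of S with φ_n → φ in the Koopman (strong operator) topology. If f and f_n (n ∈ ℕ) are measurable functions S → X with f_n → f in measure, then f_n ∘ φ_n⁻¹ → f ∘ φ⁻¹ in measure. (That is, the natural action of the automorphism group on the space of X-valued measurable functions, with the topology of convergence in measure, is jointly continuous.) -/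
open MeasureTheory Filter Topology ENNReal

lemma aux_markov {S : Type*} [MeasurableSpace S] (μ : Measure S) (W : S → ℝ≥0∞)
    (hW : Measurable W) (T : Set S) (c : ℝ) (hc : 0 < c) (g : S → ℝ)
    (hT : ∀ s, s ∈ T → ¬ ((g s)^2 < c) → ENNReal.ofReal c ≤ W s) :
    μ T ≤ μ {s | (g s)^2 < c} + (∫⁻ s, W s ∂μ) / ENNReal.ofReal c := by
  have hsub : T ⊆ {s | (g s)^2 < c} ∪ {s | ENNReal.ofReal c ≤ W s} := by
    intro s hs
    by_cases h : (g s)^2 < c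
    · exact Or.inl h
    · exact Or.inr (hT s hs h)
  calc μ T ≤ μ ({s | (g s)^2 < c} ∪ {s | ENNReal.ofReal c ≤ W s}) := measure_mono hsub
    _ ≤ μ {s | (g s)^2 < c} + μ {s | ENNReal.ofReal c ≤ W s} := measure_union_le _ _
    _ ≤ _ := by
        gcongr
        exact meas_ge_le_lintegral_div hW.aemeasurable
          (ENNReal.ofReal_pos.mpr hc).ne' ENNReal.ofReal_ne_top

lemma aux_ind {S : Type*} [MeasurableSpace S] (μ : Measure S) (g gn h1 h2 : S → ℝ)
    (hg : Measurable g) (hgn : Measurable gn) (hm1 : Measurable h1) (hm2 : Measurable h2)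
    (hb1 : ∀ s, |h1 s| ≤ 1) (c : ℝ) (hc : 0 < c) :
    μ {s | (1:ℝ) ≤ |h1 s - h2 s|} ≤ μ {s | (g s)^2 < c}
      + (2 * ∫⁻ s, ENNReal.ofReal ((gn s * h1 s - g s * h2 s)^2) ∂μ
         + 2 * ∫⁻ s, ENNReal.ofReal ((gn s - g s)^2) ∂μ) / ENNReal.ofReal c := by
  set W : S → ℝ≥0∞ := fun s => ENNReal.ofReal ((g s * (h1 s - h2 s))^2) with hWdef
  have hWm : Measurable W :=
    ((hg.mul (hm1.sub hm2)).pow_const 2).ennreal_ofReal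
  have hmark := aux_markov μ W hWm {s | (1:ℝ) ≤ |h1 s - h2 s|} c hc g ?_
  · refine hmark.trans ?_
    gcongr
    have hptw : ∀ s, W s ≤ 2 * ENNReal.ofReal ((gn s * h1 s - g s * h2 s)^2)
        + 2 * ENNReal.ofReal ((gn s - g s)^2) := by
      intro s
      have h1sq : (h1 s)^2 ≤ 1 := by
        have := abs_le.mp (hb1 s); nlinarith
      have hre : (g s * (h1 s - h2 s))^2 ≤
          2 * ((gn s * h1 s - g s * h2 s)^2) + 2 * ((gn s - g s)^2) := by
        have hid : g s * (h1 s - h2 s)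
            = (gn s * h1 s - g s * h2 s) - (gn s - g s) * h1 s := by ring
        nlinarith [sq_nonneg ((gn s * h1 s - g s * h2 s) + (gn s - g s) * h1 s),
          sq_nonneg (gn s - g s), sq_nonneg (gn s * h1 s - g s * h2 s),
          mul_le_mul_of_nonneg_left h1sq (sq_nonneg (gn s - g s))]
      calc W s ≤ ENNReal.ofReal (2 * ((gn s * h1 s - g s * h2 s)^2) + 2 * ((gn s - g s)^2)) :=
            ENNReal.ofReal_le_ofReal hre
        _ = 2 * ENNReal.ofReal ((gn s * h1 s - g s * h2 s)^2)
            + 2 * ENNReal.ofReal ((gn s - g s)^2) := by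
            rw [ENNReal.ofReal_add (by positivity) (by positivity),
              ENNReal.ofReal_mul (by norm_num), ENNReal.ofReal_mul (by norm_num)]
            norm_num
    calc ∫⁻ s, W s ∂μ ≤ ∫⁻ s, (2 * ENNReal.ofReal ((gn s * h1 s - g s * h2 s)^2)
        + 2 * ENNReal.ofReal ((gn s - g s)^2)) ∂μ := lintegral_mono hptw
      _ = 2 * ∫⁻ s, ENNReal.ofReal ((gn s * h1 s - g s * h2 s)^2) ∂μ
          + 2 * ∫⁻ s, ENNReal.ofReal ((gn s - g s)^2) ∂μ := by
          rw [lintegral_add_left (f := fun s => 2 * ENNReal.ofReal ((gn s * h1 s - g s * h2 s)^2)) ((measurable_const.mul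
            ((((hgn.mul hm1).sub (hg.mul hm2)).pow_const 2).ennreal_ofReal)))]
          rw [lintegral_const_mul (f := fun s => ENNReal.ofReal ((gn s * h1 s - g s * h2 s)^2)) _ ((((hgn.mul hm1).sub (hg.mul hm2)).pow_const 2).ennreal_ofReal),
            lintegral_const_mul (f := fun s => ENNReal.ofReal ((gn s - g s)^2)) _ (((hgn.sub hg).pow_const 2).ennreal_ofReal)]
  · intro s hs hnot
    have hs' : (1:ℝ) ≤ |h1 s - h2 s| := hs
    have hcle : c ≤ (g s)^2 := not_lt.mp hnot
    have : c ≤ (g s * (h1 s - h2 s))^2 := by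
      have h2' : 1 ≤ (h1 s - h2 s)^2 := by nlinarith [abs_nonneg (h1 s - h2 s), sq_abs (h1 s - h2 s)]
      calc c ≤ (g s)^2 := hcle
        _ ≤ (g s)^2 * (h1 s - h2 s)^2 := le_mul_of_one_le_right (sq_nonneg _) h2'
        _ = (g s * (h1 s - h2 s))^2 := by ring
    exact ENNReal.ofReal_le_ofReal this

lemma aux_key {S : Type*} [MeasurableSpace S] (μ : Measure S) [IsProbabilityMeasure μ] (e : S ≃ᵐ S)
    (hac : μ.map e ≪ μ) (A : Set S) (hA : MeasurableSet A) :
    ∫⁻ s, ((μ.map e).rnDeriv μ) s * A.indicator (fun _ => (1:ℝ≥0∞)) (e.symm s) ∂μ = μ A := by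
  have h1 : Measurable (A.indicator (fun _ => (1:ℝ≥0∞))) := measurable_const.indicator hA
  haveI : IsProbabilityMeasure (μ.map e) := Measure.isProbabilityMeasure_map e.measurable.aemeasurable
  calc ∫⁻ s, ((μ.map e).rnDeriv μ) s * A.indicator (fun _ => (1:ℝ≥0∞)) (e.symm s) ∂μ
      = ∫⁻ s, (((μ.map e).rnDeriv μ) * ((A.indicator (fun _ => (1:ℝ≥0∞))) ∘ ⇑e.symm)) s ∂μ := rfl
    _ = ∫⁻ s, ((A.indicator (fun _ => (1:ℝ≥0∞))) ∘ ⇑e.symm) s ∂(μ.withDensity ((μ.map e).rnDeriv μ)) :=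
        (lintegral_withDensity_eq_lintegral_mul μ (Measure.measurable_rnDeriv _ _)
          (h1.comp e.symm.measurable)).symm
    _ = ∫⁻ s, ((A.indicator (fun _ => (1:ℝ≥0∞))) ∘ ⇑e.symm) s ∂(μ.map e) := by
        rw [Measure.withDensity_rnDeriv_eq _ _ hac]
    _ = ∫⁻ t, A.indicator (fun _ => (1:ℝ≥0∞)) (e.symm (e t)) ∂μ :=
        lintegral_map (h1.comp e.symm.measurable) e.measurable
    _ = ∫⁻ t, A.indicator (fun _ => (1:ℝ≥0∞)) t ∂μ := by
        simp only [e.symm_apply_apply]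
    _ = μ A := by
        have : A.indicator (fun _ => (1:ℝ≥0∞)) = A.indicator 1 := rfl
        rw [this, lintegral_indicator_one hA]

lemma aux_push {S : Type*} [MeasurableSpace S] (μ : Measure S) [IsProbabilityMeasure μ]
    (e : S ≃ᵐ S) (hac : μ.map e ≪ μ) (g : S → ℝ) (hg : Measurable g)
    (A : Set S) (hA : MeasurableSet A) (c : ℝ) (hc : 0 < c) :
    μ ((⇑e.symm) ⁻¹' A) ≤ μ {s | (g s)^2 < c}
      + (2 * ∫⁻ s, ENNReal.ofReal ((Real.sqrt (((μ.map e).rnDeriv μ) s).toReal - g s)^2) ∂μ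
         + 2 * μ A) / ENNReal.ofReal c := by
  haveI : IsProbabilityMeasure (μ.map e) := Measure.isProbabilityMeasure_map e.measurable.aemeasurable
  set Dn : S → ℝ≥0∞ := (μ.map e).rnDeriv μ with hDn
  set sn : S → ℝ := fun s => Real.sqrt (Dn s).toReal with hsn
  have hsnm : Measurable sn := Real.continuous_sqrt.measurable.comp
    (Measure.measurable_rnDeriv _ _).ennreal_toReal
  set iR : S → ℝ := A.indicator (fun _ => (1:ℝ)) with hiR
  have hiRm : Measurable iR := measurable_const.indicator hA
  set W : S → ℝ≥0∞ := fun s => ENNReal.ofReal ((g s * iR (e.symm s))^2) with hW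
  have hWm : Measurable W :=
    ((hg.mul (hiRm.comp e.symm.measurable)).pow_const 2).ennreal_ofReal
  have hmark := aux_markov μ W hWm ((⇑e.symm) ⁻¹' A) c hc g ?_
  · refine hmark.trans ?_
    gcongr
    -- bound the lintegral of W
    have hlt : ∀ᵐ s ∂μ, Dn s < ⊤ := Measure.rnDeriv_lt_top _ _
    have hptw : ∀ᵐ s ∂μ, W s ≤ 2 * ENNReal.ofReal ((sn s - g s)^2)
        + 2 * (Dn s * A.indicator (fun _ => (1:ℝ≥0∞)) (e.symm s)) := by
      filter_upwards [hlt] with s hs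
      have hiR01 : iR (e.symm s) = 0 ∨ iR (e.symm s) = 1 := by
        by_cases h : e.symm s ∈ A
        · right; simp [hiR, Set.indicator_apply, h]
        · left; simp [hiR, Set.indicator_apply, h]
      have hsq : (g s * iR (e.symm s))^2 ≤ 2 * ((sn s - g s)^2)
          + 2 * ((Dn s).toReal * iR (e.symm s)) := by
        have hsn2 : (sn s)^2 = (Dn s).toReal := Real.sq_sqrt ENNReal.toReal_nonneg
        rcases hiR01 with h | h <;> rw [h] <;> nlinarith [sq_nonneg (sn s - g s),
          sq_nonneg (2 * sn s - g s), sq_nonneg (g s), ENNReal.toReal_nonneg (a := Dn s)]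
      calc W s ≤ ENNReal.ofReal (2 * ((sn s - g s)^2) + 2 * ((Dn s).toReal * iR (e.symm s))) :=
            ENNReal.ofReal_le_ofReal hsq
        _ ≤ 2 * ENNReal.ofReal ((sn s - g s)^2)
            + 2 * (Dn s * A.indicator (fun _ => (1:ℝ≥0∞)) (e.symm s)) := by
            have hnn : 0 ≤ (Dn s).toReal * iR (e.symm s) :=
              mul_nonneg ENNReal.toReal_nonneg (by rcases hiR01 with h|h <;> simp [h])
            rw [ENNReal.ofReal_add (by positivity) (mul_nonneg (by norm_num) hnn)]
            gcongr
            · rw [ENNReal.ofReal_mul (by norm_num)]; norm_num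
            · rw [ENNReal.ofReal_mul (by norm_num)]
              have h2 : ENNReal.ofReal (2:ℝ) = 2 := by norm_num
              rw [h2]
              gcongr
              by_cases h : e.symm s ∈ A
              · simp only [hiR, Set.indicator_of_mem h, mul_one]
                exact le_of_eq (ENNReal.ofReal_toReal hs.ne)
              · simp [hiR, Set.indicator_apply, h]
    calc ∫⁻ s, W s ∂μ ≤ ∫⁻ s, (2 * ENNReal.ofReal ((sn s - g s)^2)
        + 2 * (Dn s * A.indicator (fun _ => (1:ℝ≥0∞)) (e.symm s))) ∂μ := lintegral_mono_ae hptw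
      _ = 2 * ∫⁻ s, ENNReal.ofReal ((sn s - g s)^2) ∂μ + 2 * μ A := by
          have hm1 : Measurable fun s => ENNReal.ofReal ((sn s - g s)^2) :=
            ((hsnm.sub hg).pow_const 2).ennreal_ofReal
          have hm2 : Measurable fun s => Dn s * A.indicator (fun _ => (1:ℝ≥0∞)) (e.symm s) :=
            (Measure.measurable_rnDeriv _ _).mul
              ((measurable_const.indicator hA).comp e.symm.measurable)
          rw [lintegral_add_left (f := fun s => 2 * ENNReal.ofReal ((sn s - g s)^2)) (measurable_const.mul hm1), lintegral_const_mul _ hm1,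
            lintegral_const_mul _ hm2, aux_key μ e hac A hA]
  · intro s hs hnot
    have hmem : e.symm s ∈ A := hs
    have : c ≤ (g s * iR (e.symm s))^2 := by
      simp only [hiR, Set.indicator_of_mem hmem, mul_one]
      exact not_lt.mp hnot
    exact ENNReal.ofReal_le_ofReal this
/-- The natural action of the group of measure-class-preserving
automorphisms of a standard Borel probability space `(S, μ)` on the space of
measurable functions `S → X` (with the topology of convergence in measure) is
jointly continuous: if `φₙ → φ` in the Koopman topology and `fₙ → f` in
measure, then `fₙ ∘ φₙ⁻¹ → f ∘ φ⁻¹` in measure. -/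
theorem koopman_action_on_functions_continuous
    {S : Type*} [MeasurableSpace S] [StandardBorelSpace S]
    {X : Type*} [MetricSpace X] [TopologicalSpace.SeparableSpace X]
    [MeasurableSpace X] [BorelSpace X]
    (μ : Measure S) [IsProbabilityMeasure μ]
    (φ : S ≃ᵐ S) (φn : ℕ → S ≃ᵐ S)
    (hφ : μ.map φ ≪ μ ∧ μ ≪ μ.map φ)
    (hφn : ∀ n, μ.map (φn n) ≪ μ ∧ μ ≪ μ.map (φn n))
    (hK : ∀ h : S → ℝ, Measurable h → Integrable (fun s => (h s) ^ 2) μ →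
      Tendsto
        (fun n => ∫ s,
          (Real.sqrt (((μ.map (φn n)).rnDeriv μ s).toReal) * h ((φn n).symm s)
            - Real.sqrt (((μ.map φ).rnDeriv μ s).toReal) * h (φ.symm s)) ^ 2 ∂μ)
        atTop (𝓝 0))
    (f : S → X) (fn : ℕ → S → X)
    (hf : Measurable f) (hfn : ∀ n, Measurable (fn n))
    (hconv : TendstoInMeasure μ fn atTop f) :
    TendstoInMeasure μ (fun n s => fn n ((φn n).symm s)) atTop
      (fun s => f (φ.symm s)) := by
  haveI : SecondCountableTopology X := UniformSpace.secondCountable_of_separable X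
  -- notation
  set sd : S → ℝ := fun s => Real.sqrt (((μ.map φ).rnDeriv μ) s).toReal with hsddef
  set sn : ℕ → S → ℝ := fun n s => Real.sqrt (((μ.map (φn n)).rnDeriv μ) s).toReal with hsndef
  have hsdm : Measurable sd :=
    Real.continuous_sqrt.measurable.comp (Measure.measurable_rnDeriv _ _).ennreal_toReal
  have hsnm : ∀ n, Measurable (sn n) := fun n =>
    Real.continuous_sqrt.measurable.comp (Measure.measurable_rnDeriv _ _).ennreal_toReal
  have hKs : ∀ h : S → ℝ, Measurable h → Integrable (fun s => (h s) ^ 2) μ →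
      Tendsto (fun n => ∫ s, (sn n s * h ((φn n).symm s) - sd s * h (φ.symm s)) ^ 2 ∂μ)
        atTop (𝓝 0) := hK
  -- integrability facts
  have hintD : Integrable (fun s => (((μ.map φ).rnDeriv μ) s).toReal) μ := by
    haveI : IsProbabilityMeasure (μ.map φ) := Measure.isProbabilityMeasure_map φ.measurable.aemeasurable
    exact Measure.integrable_toReal_rnDeriv
  have hintDn : ∀ n, Integrable (fun s => (((μ.map (φn n)).rnDeriv μ) s).toReal) μ := fun n => by
    haveI : IsProbabilityMeasure (μ.map (φn n)) :=
      Measure.isProbabilityMeasure_map (φn n).measurable.aemeasurable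
    exact Measure.integrable_toReal_rnDeriv
  have hu2 : ∀ (n : ℕ) (h1 h2 : S → ℝ), Measurable h1 → Measurable h2 →
      (∀ s, |h1 s| ≤ 1) → (∀ s, |h2 s| ≤ 1) →
      Integrable (fun s => (sn n s * h1 s - sd s * h2 s)^2) μ := by
    intro n h1 h2 hm1 hm2 hb1 hb2
    refine Integrable.mono' (((hintDn n).const_mul 2).add (hintD.const_mul 2))
      ((((hsnm n).mul hm1).sub (hsdm.mul hm2)).pow_const 2).aestronglyMeasurable
      (ae_of_all _ fun s => ?_)
    have e1 : (h1 s)^2 ≤ 1 := by have := abs_le.mp (hb1 s); nlinarith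
    have e2 : (h2 s)^2 ≤ 1 := by have := abs_le.mp (hb2 s); nlinarith
    have esn : (sn n s)^2 = (((μ.map (φn n)).rnDeriv μ) s).toReal :=
      Real.sq_sqrt ENNReal.toReal_nonneg
    have esd : (sd s)^2 = (((μ.map φ).rnDeriv μ) s).toReal := Real.sq_sqrt ENNReal.toReal_nonneg
    rw [Real.norm_eq_abs, abs_of_nonneg (sq_nonneg _)]
    simp only [Pi.add_apply]
    nlinarith [sq_nonneg (sn n s * h1 s + sd s * h2 s), sq_nonneg (sn n s), sq_nonneg (sd s),
      mul_le_mul_of_nonneg_left e1 (sq_nonneg (sn n s)),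
      mul_le_mul_of_nonneg_left e2 (sq_nonneg (sd s))]
  -- L² convergence of sqrt densities
  have hIv : Tendsto (fun n => ∫ s, (sn n s - sd s)^2 ∂μ) atTop (𝓝 0) := by
    have := hKs (fun _ => (1:ℝ)) measurable_const (by simpa using integrable_const (1:ℝ))
    simpa using this
  have hIvE : Tendsto (fun n => ENNReal.ofReal (∫ s, (sn n s - sd s)^2 ∂μ)) atTop (𝓝 0) := by
    simpa using ENNReal.tendsto_ofReal hIv
  have hIv2 : ∀ n, Integrable (fun s => (sn n s - sd s)^2) μ := by
    intro n
    have := hu2 n (fun _ => 1) (fun _ => 1) measurable_const measurable_const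
      (fun s => by norm_num) (fun s => by norm_num)
    simpa using this
  have hIvlin : ∀ n, ∫⁻ s, ENNReal.ofReal ((sn n s - sd s)^2) ∂μ
      = ENNReal.ofReal (∫ s, (sn n s - sd s)^2 ∂μ) :=
    fun n => (ofReal_integral_eq_lintegral_ofReal (hIv2 n) (ae_of_all _ fun s => sq_nonneg _)).symm
  -- small density sets
  have hsmall : ∀ b : ℝ≥0∞, 0 < b → ∃ c : ℝ, 0 < c ∧ μ {s | (sd s)^2 < c} ≤ b := by
    intro b hb
    have heq : ∀ c : ℝ, {s | (sd s)^2 < c} = {s | (((μ.map φ).rnDeriv μ) s).toReal < c} := by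
      intro c; ext s; simp [hsddef, Real.sq_sqrt ENNReal.toReal_nonneg]
    have hpos : ∀ᵐ s ∂μ, 0 < (((μ.map φ).rnDeriv μ) s).toReal := by
      have h1 : ∀ᵐ s ∂μ, 0 < ((μ.map φ).rnDeriv μ) s :=
        (Measure.rnDeriv_pos hφ.1).filter_mono hφ.2.ae_le
      have h2 : ∀ᵐ s ∂μ, ((μ.map φ).rnDeriv μ) s < ⊤ := Measure.rnDeriv_lt_top _ _
      filter_upwards [h1, h2] with s hs1 hs2
      exact ENNReal.toReal_pos hs1.ne' hs2.ne
    set G : ℕ → Set S := fun m => {s | (((μ.map φ).rnDeriv μ) s).toReal < 1/(m+1:ℝ)} with hG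
    have hGm : ∀ m, MeasurableSet (G m) := fun m =>
      measurableSet_lt (Measure.measurable_rnDeriv _ _).ennreal_toReal measurable_const
    have hGanti : Antitone G := by
      intro m m' hmm' s hs
      simp only [hG, Set.mem_setOf_eq] at hs ⊢
      refine lt_of_lt_of_le hs ?_
      have : (m:ℝ) + 1 ≤ (m':ℝ) + 1 := by exact_mod_cast by omega
      exact one_div_le_one_div_of_le (by positivity) this
    have hGint : μ (⋂ m, G m) = 0 := by
      refine measure_mono_null ?_ (ae_iff.mp hpos)
      intro s hs
      simp only [Set.mem_iInter, hG, Set.mem_setOf_eq] at hs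
      simp only [Set.mem_setOf_eq]
      intro hcon
      obtain ⟨m, hm⟩ := exists_nat_one_div_lt hcon
      exact absurd (hs m) (not_lt.mpr hm.le)
    have hten : Tendsto (fun m => μ (G m)) atTop (𝓝 0) := by
      have := tendsto_measure_iInter_atTop (μ := μ) (fun m => (hGm m).nullMeasurableSet) hGanti
        ⟨0, measure_ne_top μ _⟩
      rw [hGint] at this
      exact this
    obtain ⟨m, hm⟩ := (ENNReal.tendsto_nhds_zero.mp hten b hb).exists
    exact ⟨1/(m+1:ℝ), by positivity, by rw [heq]; exact hm⟩
  -- the indicator convergence lemma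
  have hL1 : ∀ (Bs : Set S), MeasurableSet Bs →
      Tendsto (fun n => μ (((φn n).symm ⁻¹' Bs) \ ((φ.symm : S → S) ⁻¹' Bs))) atTop (𝓝 0) := by
    intro Bs hBs
    rw [ENNReal.tendsto_nhds_zero]
    intro b hb
    set hInd : S → ℝ := Bs.indicator (fun _ => (1:ℝ)) with hInddef
    have hIndm : Measurable hInd := measurable_const.indicator hBs
    have hIndb : ∀ s, |hInd s| ≤ 1 := by
      intro s
      by_cases h : s ∈ Bs <;> simp [hInddef, Set.indicator_apply, h]
    have hIndint : Integrable (fun s => (hInd s)^2) μ := by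
      refine Integrable.mono' (integrable_const (1:ℝ)) ((hIndm.pow_const 2).aestronglyMeasurable)
        (ae_of_all _ fun s => ?_)
      rw [Real.norm_eq_abs, abs_of_nonneg (sq_nonneg _)]
      have := abs_le.mp (hIndb s); nlinarith
    have hIu : Tendsto (fun n => ∫ s, (sn n s * hInd ((φn n).symm s)
        - sd s * hInd (φ.symm s))^2 ∂μ) atTop (𝓝 0) := hKs hInd hIndm hIndint
    have hIuE : Tendsto (fun n => ENNReal.ofReal (∫ s, (sn n s * hInd ((φn n).symm s)
        - sd s * hInd (φ.symm s))^2 ∂μ)) atTop (𝓝 0) := by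
      simpa using ENNReal.tendsto_ofReal hIu
    obtain ⟨c', hc', hc'μ⟩ := hsmall (b/2) (ENNReal.div_pos hb.ne' (by norm_num))
    set C' := ENNReal.ofReal c' with hC'
    have hC'0 : C' ≠ 0 := (ENNReal.ofReal_pos.mpr hc').ne'
    have hC't : C' ≠ ⊤ := ENNReal.ofReal_ne_top
    set t' := ((b/2) * C') / 4 with ht'
    have ht'pos : 0 < t' := ENNReal.div_pos
      (ENNReal.mul_pos (ENNReal.div_pos hb.ne' (by norm_num)).ne' hC'0).ne' (by norm_num)
    filter_upwards [ENNReal.tendsto_nhds_zero.mp hIuE t' ht'pos,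
      ENNReal.tendsto_nhds_zero.mp hIvE t' ht'pos] with n hn1 hn2
    have hsubset : (((φn n).symm ⁻¹' Bs) \ ((φ.symm : S → S) ⁻¹' Bs)) ⊆
        {s | (1:ℝ) ≤ |hInd ((φn n).symm s) - hInd (φ.symm s)|} := by
      rintro s ⟨hs1, hs2⟩
      have hm1 : ((φn n).symm s) ∈ Bs := hs1
      have hm2 : ¬ ((φ.symm s) ∈ Bs) := hs2
      simp only [Set.mem_setOf_eq, hInddef]
      rw [Set.indicator_of_mem hm1, Set.indicator_of_notMem hm2]
      simp
    have hbound := aux_ind μ sd (sn n) (fun s => hInd ((φn n).symm s)) (fun s => hInd (φ.symm s))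
      hsdm (hsnm n) (hIndm.comp (φn n).symm.measurable) (hIndm.comp φ.symm.measurable)
      (fun s => hIndb _) c' hc'
    have hlin1 : ∫⁻ s, ENNReal.ofReal ((sn n s * hInd ((φn n).symm s)
        - sd s * hInd (φ.symm s))^2) ∂μ = ENNReal.ofReal (∫ s, (sn n s * hInd ((φn n).symm s)
        - sd s * hInd (φ.symm s))^2 ∂μ) :=
      (ofReal_integral_eq_lintegral_ofReal
        (hu2 n _ _ (hIndm.comp (φn n).symm.measurable) (hIndm.comp φ.symm.measurable)
          (fun s => hIndb _) (fun s => hIndb _))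
        (ae_of_all _ fun s => sq_nonneg _)).symm
    calc μ (((φn n).symm ⁻¹' Bs) \ ((φ.symm : S → S) ⁻¹' Bs))
        ≤ μ {s | (1:ℝ) ≤ |hInd ((φn n).symm s) - hInd (φ.symm s)|} := measure_mono hsubset
      _ ≤ μ {s | (sd s)^2 < c'} + (2 * ∫⁻ s, ENNReal.ofReal ((sn n s * hInd ((φn n).symm s)
            - sd s * hInd (φ.symm s))^2) ∂μ
            + 2 * ∫⁻ s, ENNReal.ofReal ((sn n s - sd s)^2) ∂μ) / C' := hbound
      _ ≤ b/2 + b/2 := add_le_add hc'μ (by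
            rw [ENNReal.div_le_iff hC'0 hC't]
            rw [hlin1, hIvlin n]
            calc 2 * ENNReal.ofReal (∫ s, (sn n s * hInd ((φn n).symm s)
                - sd s * hInd (φ.symm s))^2 ∂μ) + 2 * ENNReal.ofReal (∫ s, (sn n s - sd s)^2 ∂μ)
                ≤ 2 * t' + 2 * t' := by gcongr
              _ = 4 * (((b/2) * C') / 4) := by rw [ht']; ring
              _ ≤ (b/2) * C' := ENNReal.mul_div_le)
      _ = b := ENNReal.add_halves b
  -- now the main argument
  rw [tendstoInMeasure_iff_dist] at hconv ⊢
  intro ε hε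
  rw [ENNReal.tendsto_nhds_zero]
  intro η hη
  rcases eq_or_ne η ⊤ with rfl | hηt
  · exact Eventually.of_forall fun n => le_top
  have hSne : Nonempty S := by
    by_contra h
    rw [not_nonempty_iff] at h
    have h0 : μ Set.univ = 1 := measure_univ
    rw [Set.univ_eq_empty_iff.mpr h, measure_empty] at h0
    exact one_ne_zero h0.symm
  haveI : Nonempty X := ⟨f (Classical.arbitrary S)⟩
  set x : ℕ → X := TopologicalSpace.denseSeq X with hx
  have hxd : DenseRange x := TopologicalSpace.denseRange_denseSeq X
  have hδpos : 0 < ε/3 := by positivity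
  obtain ⟨c, hc, hcμ⟩ := hsmall (η/8) (ENNReal.div_pos hη.ne' (by norm_num))
  set C := ENNReal.ofReal c with hC
  have hC0 : C ≠ 0 := (ENNReal.ofReal_pos.mpr hc).ne'
  have hCt : C ≠ ⊤ := ENNReal.ofReal_ne_top
  set t := ((η/8) * C) / 4 with ht
  have htpos : 0 < t := ENNReal.div_pos
    (ENNReal.mul_pos (ENNReal.div_pos hη.ne' (by norm_num)).ne' hC0).ne' (by norm_num)
  -- exceptional sets
  set E : ℕ → Set S := fun K => ⋂ k ∈ Finset.range (K+1), {s | ε/3 ≤ dist (f s) (x k)} with hE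
  have hEmeas : ∀ K, MeasurableSet (E K) := fun K =>
    MeasurableSet.biInter (Finset.range (K+1)).countable_toSet
      (fun k _ => measurableSet_le measurable_const (hf.dist measurable_const))
  have hEanti : Antitone E := by
    intro K K' hKK' s hs
    simp only [hE, Set.mem_iInter] at hs ⊢
    intro k hk
    exact hs k (Finset.mem_range.mpr (lt_of_lt_of_le (Finset.mem_range.mp hk) (by omega)))
  have hEint : ⋂ K, E K = ∅ := by
    ext s
    simp only [Set.mem_iInter, Set.mem_empty_iff_false, iff_false]
    intro h
    obtain ⟨k, hk⟩ := hxd.exists_dist_lt (f s) hδpos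
    have := h k
    simp only [hE, Set.mem_iInter, Set.mem_setOf_eq] at this
    exact absurd (this k (Finset.mem_range.mpr (by omega))) (not_le.mpr hk)
  have hEten : Tendsto (fun K => μ (E K)) atTop (𝓝 0) := by
    have := tendsto_measure_iInter_atTop (μ := μ) (fun K => (hEmeas K).nullMeasurableSet) hEanti
      ⟨0, measure_ne_top μ _⟩
    rw [hEint] at this
    simpa [Function.comp_def] using this
  obtain ⟨K, hKE⟩ := (ENNReal.tendsto_nhds_zero.mp hEten t htpos).exists
  -- cells
  set B : ℕ → Set S := fun k =>
    {s | dist (f s) (x k) < ε/3 ∧ ∀ j < k, ε/3 ≤ dist (f s) (x j)} with hBdef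
  have hBmeas : ∀ k, MeasurableSet (B k) := by
    intro k
    have : B k = {s | dist (f s) (x k) < ε/3} ∩
        ⋂ j ∈ Finset.range k, {s | ε/3 ≤ dist (f s) (x j)} := by
      ext s
      simp [hBdef, Finset.mem_range]
    rw [this]
    exact (measurableSet_lt (hf.dist measurable_const) measurable_const).inter
      (MeasurableSet.biInter (Finset.range k).countable_toSet
        (fun j _ => measurableSet_le measurable_const (hf.dist measurable_const)))
  -- the A_n sets
  set A : ℕ → Set S := fun n => {s | ε/3 ≤ dist (fn n s) (f s)} with hAdef
  have hAmeas : ∀ n, MeasurableSet (A n) := fun n =>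
    measurableSet_le measurable_const ((hfn n).dist hf)
  have hAten : Tendsto (fun n => μ (A n)) atTop (𝓝 0) := hconv (ε/3) hδpos
  -- inclusion
  have hincl : ∀ n, {s | ε ≤ dist (fn n ((φn n).symm s)) (f (φ.symm s))} ⊆
      (((φn n).symm : S → S) ⁻¹' (E K)) ∪
      (⋃ k ∈ Finset.range (K+1), ((((φn n).symm : S → S) ⁻¹' B k) \ ((φ.symm : S → S) ⁻¹' B k)))
      ∪ (((φn n).symm : S → S) ⁻¹' A n) := by
    intro n s hs
    by_contra hcon
    simp only [Set.mem_union, Set.mem_preimage, Set.mem_iUnion, not_or, not_exists] at hcon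
    obtain ⟨⟨hE', hdiff⟩, hA'⟩ := hcon
    simp only [hE, Set.mem_iInter, Set.mem_setOf_eq, not_forall, not_le] at hE'
    obtain ⟨k, hkr, hk⟩ := hE'
    have hPex : ∃ j, dist (f ((φn n).symm s)) (x j) < ε/3 := ⟨k, hk⟩
    set k₀ := Nat.find hPex with hk₀def
    have hk₀ : dist (f ((φn n).symm s)) (x k₀) < ε/3 := Nat.find_spec hPex
    have hk₀le : k₀ ≤ k := Nat.find_min' hPex hk
    have hk₀r : k₀ ∈ Finset.range (K+1) :=
      Finset.mem_range.mpr (lt_of_le_of_lt hk₀le (Finset.mem_range.mp hkr))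
    have htB : (φn n).symm s ∈ B k₀ :=
      ⟨hk₀, fun j hj => not_lt.mp (Nat.find_min hPex hj)⟩
    have ht'B : φ.symm s ∈ B k₀ := by
      have := hdiff k₀
      simp only [Set.mem_diff, Set.mem_preimage, not_and, not_not] at this
      exact this hk₀r htB
    have hd1 : dist (f ((φn n).symm s)) (x k₀) < ε/3 := hk₀
    have hd2 : dist (f (φ.symm s)) (x k₀) < ε/3 := ht'B.1
    have hd3 : dist (fn n ((φn n).symm s)) (f ((φn n).symm s)) < ε/3 := by
      simp only [hAdef, Set.mem_setOf_eq, not_le] at hA'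
      exact hA'
    have htri : dist (fn n ((φn n).symm s)) (f (φ.symm s)) ≤
        dist (fn n ((φn n).symm s)) (f ((φn n).symm s))
        + dist (f ((φn n).symm s)) (x k₀) + dist (x k₀) (f (φ.symm s)) := dist_triangle4 _ _ _ _
    rw [dist_comm (x k₀) (f (φ.symm s))] at htri
    have hs' : ε ≤ dist (fn n ((φn n).symm s)) (f (φ.symm s)) := hs
    linarith
  -- eventual bounds
  have hev3 : ∀ᶠ n in atTop, ∀ k ∈ Finset.range (K+1),
      μ ((((φn n).symm : S → S) ⁻¹' B k) \ ((φ.symm : S → S) ⁻¹' B k)) ≤ (η/8)/(K+1) := by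
    rw [eventually_all_finset]
    intro k _
    have hpos : (0:ℝ≥0∞) < (η/8)/(K+1) :=
      ENNReal.div_pos (ENNReal.div_pos hη.ne' (by norm_num)).ne' (by simp)
    exact ENNReal.tendsto_nhds_zero.mp (hL1 (B k) (hBmeas k)) _ hpos
  filter_upwards [ENNReal.tendsto_nhds_zero.mp hIvE t htpos,
    ENNReal.tendsto_nhds_zero.mp hAten t htpos, hev3] with n hn1 hn2 hn3
  -- push bound helper
  have hpush : ∀ (A' : Set S), MeasurableSet A' → μ A' ≤ t →
      μ (((φn n).symm : S → S) ⁻¹' A') ≤ η/8 + η/8 := by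
    intro A' hA' hA't
    have := aux_push μ (φn n) (hφn n).1 sd hsdm A' hA' c hc
    refine this.trans (add_le_add hcμ ?_)
    rw [ENNReal.div_le_iff hC0 hCt, hIvlin n]
    calc 2 * ENNReal.ofReal (∫ s, (sn n s - sd s)^2 ∂μ) + 2 * μ A'
        ≤ 2 * t + 2 * t := by gcongr
      _ = 4 * (((η/8) * C) / 4) := by rw [ht]; ring
      _ ≤ (η/8) * C := ENNReal.mul_div_le
  calc μ {s | ε ≤ dist (fn n ((φn n).symm s)) (f (φ.symm s))}
      ≤ μ ((((φn n).symm : S → S) ⁻¹' (E K)) ∪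
        (⋃ k ∈ Finset.range (K+1), ((((φn n).symm : S → S) ⁻¹' B k) \ ((φ.symm : S → S) ⁻¹' B k)))
        ∪ (((φn n).symm : S → S) ⁻¹' A n)) := measure_mono (hincl n)
    _ ≤ μ ((((φn n).symm : S → S) ⁻¹' (E K)) ∪
        (⋃ k ∈ Finset.range (K+1), ((((φn n).symm : S → S) ⁻¹' B k) \ ((φ.symm : S → S) ⁻¹' B k))))
        + μ (((φn n).symm : S → S) ⁻¹' A n) := measure_union_le _ _
    _ ≤ (μ (((φn n).symm : S → S) ⁻¹' (E K))
        + μ (⋃ k ∈ Finset.range (K+1), ((((φn n).symm : S → S) ⁻¹' B k) \ ((φ.symm : S → S) ⁻¹' B k))))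
        + μ (((φn n).symm : S → S) ⁻¹' A n) := by gcongr; exact measure_union_le _ _
    _ ≤ ((η/8 + η/8) + η/8) + (η/8 + η/8) := by
        gcongr
        · exact hpush (E K) (hEmeas K) hKE
        · calc μ (⋃ k ∈ Finset.range (K+1),
              ((((φn n).symm : S → S) ⁻¹' B k) \ ((φ.symm : S → S) ⁻¹' B k)))
              ≤ ∑ k ∈ Finset.range (K+1),
                μ ((((φn n).symm : S → S) ⁻¹' B k) \ ((φ.symm : S → S) ⁻¹' B k)) :=
                measure_biUnion_finset_le _ _
            _ ≤ ∑ k ∈ Finset.range (K+1), (η/8)/(K+1) := Finset.sum_le_sum hn3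
            _ = (K+1) * ((η/8)/(K+1)) := by
                rw [Finset.sum_const, Finset.card_range, nsmul_eq_mul]; norm_num
            _ ≤ η/8 := by
                have : ((K:ℝ≥0∞)+1) * ((η/8)/((K:ℝ≥0∞)+1)) ≤ η/8 := ENNReal.mul_div_le
                convert this using 2 <;> simp
        · exact hpush (A n) (hAmeas n) hn2
    _ ≤ η := by
        have h8 : (8:ℝ≥0∞) * (η/8) ≤ η := ENNReal.mul_div_le
        calc ((η/8 + η/8) + η/8) + (η/8 + η/8) = 5 * (η/8) := by ring
          _ ≤ 8 * (η/8) := by gcongr <;> norm_num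
          _ ≤ η := h8
end

section
/- Let G be a locally compact second countable topological group, (Ω,ν) and (S,μ) standard Borel probability spaces, and ρ : G × (Ω × S) → Ω × S a Borel action of G of the form ρ(g,(ω,s)) = (ω, ρ_S(g,ω,s)) for a Borel map ρ_S : G × Ω × S → S, such that for every g ∈ G and ω ∈ Ω the map s ↦ ρ_S(g,ω,s) pushes μ forward to a measure mutually absolutely continuous with μ. Then there exists a jointly Borel function D : G × Ω × S → [0,∞) such that for every g ∈ G, every ω ∈ Ω, and every measurable f : S → [0,∞], one has ∫_S D(g,ω,s)·f(s) dμ(s) = ∫_S f(ρ_S(g,ω,s)) dμ(s). In other words, the fiberwise Radon–Nikodym derivatives can be chosen to depend Borel-measurably on (g,ω,s) jointly. -/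
open MeasureTheory Filter Topology
open scoped ENNReal

/-- For a Borel action of a locally compact second countable group
`G` on `Ω × S` fixing the `Ω`-coordinate, with each fiber map quasi-invariant
for `μ`, the fiberwise Radon–Nikodym derivatives can be chosen jointly Borel:
there is a Borel `D : G × Ω × S → [0,∞)` with
`∫ D(g,ω,s) f(s) dμ(s) = ∫ f(ρ_S(g,ω,s)) dμ(s)` for all `g, ω` and all
measurable `f : S → [0,∞]`. -/
theorem fiberwise_radon_nikodym_jointly_borel
    {G Ω S : Type*}
    [TopologicalSpace G] [Group G] [IsTopologicalGroup G] [LocallyCompactSpace G]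
    [SecondCountableTopology G] [MeasurableSpace G] [BorelSpace G]
    [MeasurableSpace Ω] [StandardBorelSpace Ω]
    [MeasurableSpace S] [StandardBorelSpace S]
    (ν : Measure Ω) [IsProbabilityMeasure ν]
    (μ : Measure S) [IsProbabilityMeasure μ]
    (ρS : G → Ω → S → S)
    (hρmeas : Measurable (fun p : G × Ω × S => ρS p.1 p.2.1 p.2.2))
    (hρid : ∀ ω s, ρS 1 ω s = s)
    (hρact : ∀ g₁ g₂ ω s, ρS (g₁ * g₂) ω s = ρS g₁ ω (ρS g₂ ω s))
    (hqi : ∀ g ω, μ.map (ρS g ω) ≪ μ ∧ μ ≪ μ.map (ρS g ω)) :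
    ∃ D : G × Ω × S → NNReal, Measurable D ∧
      ∀ (g : G) (ω : Ω) (f : S → ℝ≥0∞), Measurable f →
        ∫⁻ s, (D (g, ω, s) : ℝ≥0∞) * f s ∂μ = ∫⁻ s, f (ρS g ω s) ∂μ := by
  -- measurability of the sections
  have hsec : ∀ (g : G) (ω : Ω), Measurable (ρS g ω) := by
    intro g ω
    exact hρmeas.comp ((measurable_const.prodMk
      (measurable_const.prodMk measurable_id)) :
      Measurable fun s : S => ((g, (ω, s)) : G × Ω × S))
  -- the kernel (g, ω) ↦ μ.map (ρS g ω)
  set κ : ProbabilityTheory.Kernel (G × Ω) S :=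
    { toFun := fun p => μ.map (ρS p.1 p.2)
      measurable' := by
        apply Measure.measurable_of_measurable_coe
        intro A hA
        have : ∀ p : G × Ω, μ.map (ρS p.1 p.2) A = μ ((fun s => ρS p.1 p.2 s) ⁻¹' A) := by
          intro p
          rw [Measure.map_apply (hsec p.1 p.2) hA]
        simp_rw [this]
        have hset : MeasurableSet {q : (G × Ω) × S | ρS q.1.1 q.1.2 q.2 ∈ A} := by
          have : Measurable fun q : (G × Ω) × S => ρS q.1.1 q.1.2 q.2 :=
            hρmeas.comp ((measurable_fst.fst).prodMk
              ((measurable_fst.snd).prodMk measurable_snd))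
          exact this hA
        exact measurable_measure_prodMk_left hset } with hκ
  have hκapp : ∀ p : G × Ω, κ p = μ.map (ρS p.1 p.2) := fun p => rfl
  have : ProbabilityTheory.IsFiniteKernel κ := by
    refine ⟨1, ENNReal.one_lt_top, fun p => ?_⟩
    rw [hκapp]
    rw [Measure.map_apply (hsec p.1 p.2) MeasurableSet.univ]
    simp
  set η : ProbabilityTheory.Kernel (G × Ω) S := ProbabilityTheory.Kernel.const _ μ with hη
  refine ⟨fun p => (ProbabilityTheory.Kernel.rnDeriv κ η (p.1, p.2.1) p.2.2).toNNReal, ?_, ?_⟩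
  · exact ((ProbabilityTheory.Kernel.measurable_rnDeriv κ η).comp
      ((measurable_fst.prodMk measurable_snd.fst).prodMk measurable_snd.snd)).ennreal_toNNReal
  · intro g ω f hf
    have hac : μ.map (ρS g ω) ≪ μ := (hqi g ω).1
    have h1 : ProbabilityTheory.Kernel.rnDeriv κ η (g, ω) =ᵐ[μ]
        (μ.map (ρS g ω)).rnDeriv μ := by
      have := ProbabilityTheory.Kernel.rnDeriv_eq_rnDeriv_measure (κ := κ) (η := η) (a := (g, ω))
      simpa [hη, hκapp] using this
    have h2 : ∀ᵐ s ∂μ, (μ.map (ρS g ω)).rnDeriv μ s < ⊤ :=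
      Measure.rnDeriv_lt_top _ _
    have hcongr : (fun s => ((ProbabilityTheory.Kernel.rnDeriv κ η (g, ω) s).toNNReal : ℝ≥0∞) * f s)
        =ᵐ[μ] fun s => (μ.map (ρS g ω)).rnDeriv μ s * f s := by
      filter_upwards [h1, h2] with s hs hs'
      rw [hs, ENNReal.coe_toNNReal hs'.ne]
    rw [lintegral_congr_ae hcongr, lintegral_rnDeriv_mul hac hf.aemeasurable,
      lintegral_map hf (hsec g ω)]
end

section
/- Let G be a locally compact second countable topological group with a left Haar measure λ, let H be a topological group, let (X,μ) be a standard Borel probability space, and let ρ : G × X → X be a Borel action such that for every g ∈ G the map x ↦ ρ(g,x) pushes μ forward to a measure mutually absolutely continuous with μ. Let α, β : G × X → H be strict Borel cocycles for ρ. If for λ-almost every g ∈ G one has α(g,x) = β(g,x) for μ-almost every x ∈ X, then for every g ∈ G one has α(g,x) = β(g,x) for μ-almost every x ∈ X. -/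
open MeasureTheory Filter Topology

/-- If two strict Borel cocycles `α, β : G × X → H` over a Borel
action with quasi-invariant measure agree a.e. on `X` for Haar-almost every
`g ∈ G`, then they agree a.e. on `X` for every `g ∈ G`. -/
theorem strict_cocycles_ae_equal_of_haar_ae_equal
    {G H X : Type*}
    [TopologicalSpace G] [Group G] [IsTopologicalGroup G] [LocallyCompactSpace G]
    [SecondCountableTopology G] [MeasurableSpace G] [BorelSpace G]
    [TopologicalSpace H] [Group H] [IsTopologicalGroup H]
    [MeasurableSpace H] [BorelSpace H]
    [MeasurableSpace X] [StandardBorelSpace X]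
    (lam : Measure G) [lam.IsHaarMeasure]
    (μ : Measure X) [IsProbabilityMeasure μ]
    (ρ : G → X → X) (hρ : Measurable (fun p : G × X => ρ p.1 p.2))
    (hρid : ∀ x, ρ 1 x = x)
    (hρact : ∀ g₁ g₂ x, ρ (g₁ * g₂) x = ρ g₁ (ρ g₂ x))
    (hqi : ∀ g, μ.map (ρ g) ≪ μ ∧ μ ≪ μ.map (ρ g))
    (α β : G → X → H)
    (hα : Measurable (fun p : G × X => α p.1 p.2))
    (hβ : Measurable (fun p : G × X => β p.1 p.2))
    (hαcoc : ∀ g₁ g₂ x, α (g₁ * g₂) x = α g₁ (ρ g₂ x) * α g₂ x)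
    (hβcoc : ∀ g₁ g₂ x, β (g₁ * g₂) x = β g₁ (ρ g₂ x) * β g₂ x)
    (hae : ∀ᵐ g ∂lam, ∀ᵐ x ∂μ, α g x = β g x) :
    ∀ g : G, ∀ᵐ x ∂μ, α g x = β g x := by
  intro g
  classical
  -- Step 1: for a.e. h, also g * h⁻¹ satisfies the a.e. equality.
  have hae2 : ∀ᵐ h ∂lam, ∀ᵐ x ∂μ, α (g * h⁻¹) x = β (g * h⁻¹) x := by
    rw [ae_iff] at hae ⊢
    set N := toMeasurable lam {h | ¬ ∀ᵐ x ∂μ, α h x = β h x} with hNdef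
    have hN0 : lam N = 0 := by rw [hNdef, measure_toMeasurable]; exact hae
    have hsub : {h | ¬ ∀ᵐ x ∂μ, α (g * h⁻¹) x = β (g * h⁻¹) x}
        ⊆ (fun h : G => g * h⁻¹) ⁻¹' N := fun h hh => subset_toMeasurable _ _ hh
    refine measure_mono_null hsub ?_
    have hset : (fun h : G => g * h⁻¹) ⁻¹' N = ((g * ·) ⁻¹' N)⁻¹ := rfl
    rw [hset, measure_inv_null, measure_preimage_mul]
    exact hN0
  have hcomb := hae.and hae2
  obtain ⟨h, hPh, hPg⟩ := hcomb.exists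
  -- Step 2: transfer the a.e. equality for g * h⁻¹ along ρ h.
  have hρh : Measurable (ρ h) := hρ.comp (measurable_const.prodMk measurable_id)
  have key : ∀ᵐ x ∂μ, α (g * h⁻¹) (ρ h x) = β (g * h⁻¹) (ρ h x) := by
    rw [ae_iff] at hPg ⊢
    set N := toMeasurable μ {y | ¬ α (g * h⁻¹) y = β (g * h⁻¹) y} with hNdef
    have hNm : MeasurableSet N := measurableSet_toMeasurable μ _
    have hN0 : μ N = 0 := by rw [hNdef, measure_toMeasurable]; exact hPg
    have hmap : μ (ρ h ⁻¹' N) = 0 := by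
      have h1 : μ.map (ρ h) N = 0 := (hqi h).1 hN0
      rwa [Measure.map_apply hρh hNm] at h1
    refine measure_mono_null (fun x hx => ?_) hmap
    exact subset_toMeasurable μ {y | ¬ α (g * h⁻¹) y = β (g * h⁻¹) y} hx
  filter_upwards [hPh, key] with x h1 h2
  have hg : g = (g * h⁻¹) * h := by group
  rw [hg, hαcoc, hβcoc, h1, h2]
end
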